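/- arXiv:1806.04825 — 7 statements merged into one kernel-verified Lean document; each statement's English description precedes it below -/
import Mathlib

section
/- Let W be the signed permutation group of rank n, viewed as the Weyl group of type C_n with simple roots α_i = e_i − e_{i+1} (1 ≤ i ≤ n−1) and α_n = 2e_n. Define a graph on involutions W[2]: there is an edge w →^α w' for a simple root α whenever w' = s_α w s_α and wα ≠ ±α. For w = τc ∈ W[2] define c₍₎(w) = {i : i < τ(i)}. If there is a path w ↷^σ w' in this graph (σ the product of the corresponding simple reflections), then σ c₍₎(w) σ⁻¹ = c₍₎(w') as subsets of {1,…,n} (products taken in W). -/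
open SemidirectProduct

/-- `Ξ_n`, the group of subsets of `{1,…,n}` under symmetric difference, realized as
`(ℤ/2ℤ)^n` written multiplicatively (a subset is identified with its indicator). -/
abbrev Xi (n : ℕ) := Fin n → Multiplicative (ZMod 2)

/-- The action of `S_n` on `Ξ_n` given by `τ·c = τ(c)`. -/
def permAct {n : ℕ} (τ : Equiv.Perm (Fin n)) : MulAut (Xi n) where
  toFun c := c ∘ τ.symm
  invFun c := c ∘ τ
  left_inv c := by funext i; simp
  right_inv c := by funext i; simp
  map_mul' c d := rfl

/-- The homomorphism `S_n →* Aut(Ξ_n)` defining the semidirect product. -/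
def phi (n : ℕ) : Equiv.Perm (Fin n) →* MulAut (Xi n) where
  toFun := permAct
  map_one' := by ext c i; rfl
  map_mul' σ τ := by ext c i; rfl

/-- The signed permutation group `W = S_n ⋉ Ξ_n`; the element written `τc` in the paper
is `inr τ * inl c`. -/
abbrev SW (n : ℕ) := Xi n ⋊[phi n] Equiv.Perm (Fin n)

/-- The action of the signed permutation group on `ℝ^n`:
`τ(e_i) = e_{τ(i)}` and `c(e_i) = -e_i` for `i ∈ c`, `e_i` otherwise. -/
def act (n : ℕ) (w : SW n) (v : Fin n → ℝ) : Fin n → ℝ := fun j =>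
  if w.left j = 1 then v (w.right⁻¹ j) else - v (w.right⁻¹ j)

/-- The simple roots of type `C_n`: `α_i = e_i − e_{i+1}` for `i + 1 < n`, and `α_n = 2eₙ`. -/
def sroot (n : ℕ) (i : Fin n) : Fin n → ℝ := fun j =>
  if (i : ℕ) + 1 < n then
    (if j = i then 1 else 0) + (if (j : ℕ) = (i : ℕ) + 1 then -1 else 0)
  else if j = i then 2 else 0

/-- The simple reflection `s_{α_i} ∈ W`. -/
def srefl (n : ℕ) (i : Fin n) : SW n :=
  if h : (i : ℕ) + 1 < n then inr (Equiv.swap i ⟨(i : ℕ) + 1, h⟩)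
  else inl (fun j => if j = i then Multiplicative.ofAdd 1 else 1)

/-- A path `w ↷^σ w'` in the graph on involutions: each edge conjugates by a simple
reflection `s_α` with `wα ≠ ±α`, and `σ` is the product of the reflections used. -/
inductive PathC (n : ℕ) : SW n → SW n → SW n → Prop where
  | refl (w : SW n) : PathC n w w 1
  | step {w w' σ : SW n} (i : Fin n) (h : PathC n w w' σ)
      (h1 : act n w' (sroot n i) ≠ sroot n i)
      (h2 : act n w' (sroot n i) ≠ - sroot n i) :
      PathC n w (srefl n i * w' * (srefl n i)⁻¹) (srefl n i * σ)

/-- `c₍₎(w) = {i : i < τ(i)}` for `w = τc`, as an element of `Ξ_n`. -/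
def clt (n : ℕ) (w : SW n) : Xi n :=
  fun i => if (i : ℕ) < (w.right i : ℕ) then Multiplicative.ofAdd 1 else 1

lemma zmod2_cases (x : Multiplicative (ZMod 2)) : x = 1 ∨ x = Multiplicative.ofAdd 1 := by
  revert x; decide

lemma zmod2_inv (x : Multiplicative (ZMod 2)) : x⁻¹ = x := by revert x; decide

lemma right_invol {n : ℕ} {w : SW n} (hw : w * w = 1) (j : Fin n) :
    w.right (w.right j) = j := by
  have hr : w.right * w.right = 1 := by
    have := congrArg SemidirectProduct.right hw; simpa [mul_right] using this
  simpa [Equiv.Perm.mul_apply] using DFunLike.congr_fun hr j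

lemma right_symm_eq {n : ℕ} {w : SW n} (hw : w * w = 1) (j : Fin n) :
    w.right.symm j = w.right j := by
  conv_lhs => rw [show j = w.right (w.right j) from (right_invol hw j).symm]
  exact Equiv.symm_apply_apply _ _

lemma right_inv_eq {n : ℕ} {w : SW n} (hw : w * w = 1) : w.right⁻¹ = w.right := by
  have hr : w.right * w.right = 1 := by
    have := congrArg SemidirectProduct.right hw; simpa [mul_right] using this
  exact inv_eq_of_mul_eq_one_right hr

lemma left_invar {n : ℕ} {w : SW n} (hw : w * w = 1) (j : Fin n) :
    w.left (w.right j) = w.left j := by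
  have hl := congrFun (congrArg SemidirectProduct.left hw) j
  simp only [mul_left] at hl
  have hl' : w.left j * w.left (w.right.symm j) = 1 := hl
  have := eq_inv_of_mul_eq_one_right hl'
  rw [right_symm_eq hw] at this
  rw [this, zmod2_inv]

/-- In the special case `τ i = i+1`, the action of an involution on `α_i` is `±α_i`. -/
lemma tau_ne {n : ℕ} {w : SW n} (hw : w * w = 1) (i : Fin n) (h : (i : ℕ) + 1 < n)
    (h1 : act n w (sroot n i) ≠ sroot n i) (h2 : act n w (sroot n i) ≠ - sroot n i) :
    w.right i ≠ ⟨(i : ℕ) + 1, h⟩ := by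
  intro hti
  set i' : Fin n := ⟨(i : ℕ) + 1, h⟩ with hi'
  have hii' : i ≠ i' := by
    intro he; have := congrArg Fin.val he; simp [hi'] at this
  have hti' : w.right i' = i := by
    conv_lhs => rw [← hti]
    exact right_invol hw i
  have hci' : w.left i' = w.left i := by rw [← hti]; exact left_invar hw i
  have key : ∀ j, act n w (sroot n i) j =
      (if w.left i = 1 then -(sroot n i j) else sroot n i j) := by
    intro j
    have hinv : w.right⁻¹ j = w.right j := by rw [right_inv_eq hw]
    unfold act
    rw [hinv]
    by_cases hji : j = i
    · rw [hji, hti]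
      have : sroot n i i' = -1 := by
        simp [sroot, h, hii'.symm, hi']; intro he; exact hii' (he.symm.trans hi'.symm)
      have hsii : sroot n i i = 1 := by
        simp [sroot, h]
      rw [this, hsii]
      split <;> norm_num
    · by_cases hji' : j = i'
      · rw [hji', hti', hci']
        have hsii : sroot n i i = 1 := by
          simp [sroot, h]
        have : sroot n i i' = -1 := by simp [sroot, h, hii'.symm, hi']; intro he; exact hii' (he.symm.trans hi'.symm)
        rw [hsii, this]
        split <;> norm_num
      · have hz : sroot n i (w.right j) = 0 := by
          have h1' : w.right j ≠ i := by
            intro he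
            apply hji'
            rw [← hti, ← he]
            exact (right_invol hw j).symm
          have h2' : (w.right j : ℕ) ≠ (i : ℕ) + 1 := by
            intro he
            apply hji
            have hwj : w.right j = i' := Fin.ext he
            rw [← hti', ← hwj]
            exact (right_invol hw j).symm
          simp [sroot, h, h1', h2']
        have hz2 : sroot n i j = 0 := by
          have h1' : j ≠ i := hji
          have h2' : (j : ℕ) ≠ (i : ℕ) + 1 := by
            intro he; exact hji' (Fin.ext he)
          simp [sroot, h, h1', h2']
        rw [hz, hz2]
        split <;> split <;> norm_num
  rcases zmod2_cases (w.left i) with hc | hc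
  · apply h2; funext j; rw [key j, hc]; simp
  · apply h1; funext j; rw [key j]
    have : w.left i ≠ 1 := by rw [hc]; decide
    simp [this]

/-- order comparison through an adjacent transposition -/
lemma swap_lt {n : ℕ} (i : Fin n) (h : (i : ℕ) + 1 < n) (m p : Fin n)
    (hmp : ¬(m = i ∧ p = ⟨(i : ℕ) + 1, h⟩)) (hpm : ¬(m = ⟨(i : ℕ) + 1, h⟩ ∧ p = i)) :
    ((Equiv.swap i ⟨(i : ℕ) + 1, h⟩ m : Fin n) : ℕ) < (Equiv.swap i ⟨(i : ℕ) + 1, h⟩ p : ℕ)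
      ↔ (m : ℕ) < (p : ℕ) := by
  rw [Equiv.swap_apply_def, Equiv.swap_apply_def]
  split_ifs <;> simp only [Fin.ext_iff, not_and] at * <;> omega

/-- the key single-step lemma -/
lemma key_step (n : ℕ) (w : SW n) (hw : w * w = 1) (i : Fin n)
    (h1 : act n w (sroot n i) ≠ sroot n i) (h2 : act n w (sroot n i) ≠ - sroot n i) :
    srefl n i * inl (clt n w) * (srefl n i)⁻¹
      = inl (clt n (srefl n i * w * (srefl n i)⁻¹)) := by
  by_cases h : (i : ℕ) + 1 < n
  · -- transposition case
    set i' : Fin n := ⟨(i : ℕ) + 1, h⟩ with hi'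
    set t := Equiv.swap i i' with ht
    have hsr : srefl n i = inr t := by rw [srefl, dif_pos h]
    rw [hsr, ← map_inv, ← inl_aut]
    congr 1
    have hright : (inr t * w * inr t⁻¹ : SW n).right = t * w.right * t⁻¹ := by
      simp [mul_right]
    funext j
    show (clt n w) (t.symm j) = _
    unfold clt
    rw [hright]
    have htsymm : t.symm = t := by rw [ht, Equiv.symm_swap]
    have htinv : t⁻¹ = t := by rw [ht, Equiv.swap_inv]
    rw [htsymm]
    have happ : ((t * w.right * t⁻¹) j) = t (w.right (t j)) := by
      rw [htinv]; rfl
    rw [happ]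
    have hne := tau_ne hw i h h1 h2
    have hiff := swap_lt i h (t j) (w.right (t j))
      (by
        rintro ⟨ha, hb⟩
        rw [ha] at hb
        exact hne hb)
      (by
        rintro ⟨ha, hb⟩
        rw [ha] at hb
        apply hne
        conv_lhs => rw [← hb]
        exact right_invol hw _)
    rw [← hi', ← ht] at hiff
    have hjj : t (t j) = j := by rw [ht]; exact Equiv.swap_apply_self _ _ _
    rw [hjj] at hiff
    simp only [hiff]
  · -- sign change case: the right component is unchanged
    set δ : Xi n := fun j => if j = i then Multiplicative.ofAdd 1 else 1 with hδ
    have hsr : srefl n i = inl δ := by rw [srefl, dif_neg h]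
    rw [hsr, ← map_inv, ← map_mul, ← map_mul]
    have hcomm : δ * clt n w * δ⁻¹ = clt n w := by
      rw [mul_comm δ (clt n w), mul_inv_cancel_right]
    rw [hcomm]
    have hright : (inl δ * w * inl δ⁻¹ : SW n).right = w.right := by
      simp [mul_right]
    congr 1

lemma path_conj {n : ℕ} {w w' σ : SW n} (hp : PathC n w w' σ) : w' = σ * w * σ⁻¹ := by
  induction hp with
  | refl => simp
  | step i hpath h1 h2 ih =>
    rw [ih]; group

/-- if `w` is an involution and `w ↷^σ w'` is a path in the involution
graph of the type-`C_n` Weyl group, then `σ c₍₎(w) σ⁻¹ = c₍₎(w')` in `W`. -/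
theorem stmt_3 (n : ℕ) (w w' σ : SW n) (hw : w * w = 1) (hp : PathC n w w' σ) :
    σ * inl (clt n w) * σ⁻¹ = (inl (clt n w') : SW n) := by
  induction hp with
  | refl => simp
  | step i hpath h1 h2 ih =>
    rename_i wmid σ0
    have hconj := path_conj hpath
    have hwmid : wmid * wmid = 1 := by
      rw [hconj]
      have : σ0 * w * σ0⁻¹ * (σ0 * w * σ0⁻¹) = σ0 * (w * w) * σ0⁻¹ := by group
      rw [this, hw, mul_one, mul_inv_cancel]
    have hre : (srefl n i * σ0) * inl (clt n w) * (srefl n i * σ0)⁻¹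
        = srefl n i * (σ0 * inl (clt n w) * σ0⁻¹) * (srefl n i)⁻¹ := by group
    rw [hre, ih, key_step n wmid hwmid i h1 h2]
end

section
/- Let W be a finite Weyl group with simple system Δ. Call an involution w ∈ W minimal if w is the longest element of the parabolic subgroup generated by {s_α : α ∈ Π} for some subset Π ⊆ Δ and wα = −α for all α ∈ Π. Consider the graph on involutions of W with an edge w → w' whenever w' = s_α w s_α for some α ∈ Δ with wα ≠ ±α. Then every involution of W is connected by a path in this graph to some minimal involution. -/
namespace SpringerStmt4

open List CoxeterSystem Finset

variable {B W : Type*} [Group W] {M : CoxeterMatrix B} (cs : CoxeterSystem M W)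

local prefix:100 "σ" => cs.simple
local prefix:100 "π" => cs.wordProd
local prefix:100 "ℓ" => cs.length

open scoped Classical

set_option linter.unusedSectionVars false

lemma zmod2_cases (x : ZMod 2) : x = 0 ∨ x = 1 := by revert x; decide

lemma zmod2_add_self (x : ZMod 2) : x + x = 0 := by revert x; decide

lemma sum_range_two_mul (f : ℕ → ZMod 2) (m : ℕ) :
    ∑ c ∈ Finset.range (2 * m), f c
      = (∑ c ∈ Finset.range m, f c) + ∑ c ∈ Finset.range m, f (m + c) := by
  have h2 : ∑ c ∈ Finset.Ico m (m + m), f c = ∑ c ∈ Finset.range m, f (m + c) := by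
    rw [Finset.sum_Ico_eq_sum_range]
    have h : m + m - m = m := by omega
    rw [h]
  calc ∑ c ∈ Finset.range (2 * m), f c
      = ∑ c ∈ Finset.Ico 0 (m + m), f c := by rw [Finset.range_eq_Ico, two_mul]
    _ = (∑ c ∈ Finset.Ico 0 m, f c) + ∑ c ∈ Finset.Ico m (m + m), f c :=
        (Finset.sum_Ico_consecutive f (Nat.zero_le m) (Nat.le_add_right m m)).symm
    _ = (∑ c ∈ Finset.range m, f c) + ∑ c ∈ Finset.range m, f (m + c) := by
        rw [← Finset.range_eq_Ico, h2]

lemma sandwich_iff (a t r : W) : a * t * a⁻¹ = r ↔ t = a⁻¹ * r * a := by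
  constructor
  · rintro rfl; group
  · rintro rfl; group

/-- The basic involution on `W × ZMod 2`: conjugate by `σ i`, toggling the sign when the
first coordinate equals `σ i`. -/
noncomputable def tog (i : B) : Equiv.Perm (W × ZMod 2) :=
  Function.Involutive.toPerm
    (fun x => (σ i * x.1 * σ i, x.2 + if x.1 = σ i then 1 else 0))
    (by
      rintro ⟨t, ε⟩
      have hiff : σ i * t * σ i = σ i ↔ t = σ i := by
        constructor
        · intro h
          have := congrArg (fun z => σ i * z * σ i) h
          simpa [mul_assoc] using this
        · rintro rfl; simp
      refine Prod.ext ?_ ?_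
      · simp [mul_assoc]
      · simp only [hiff]
        by_cases h : t = σ i <;>
          simp [h, add_assoc, zmod2_add_self])

lemma tog_apply (i : B) (t : W) (ε : ZMod 2) :
    tog cs i (t, ε) = (σ i * t * σ i, ε + if t = σ i then 1 else 0) := rfl

/-- Counting function valued in `ZMod 2`. -/
noncomputable def cnt (l : List W) (t : W) : ZMod 2 :=
  (l.map (fun r => if r = t then (1 : ZMod 2) else 0)).sum

@[simp] lemma cnt_nil (t : W) : cnt ([] : List W) t = 0 := rfl

@[simp] lemma cnt_cons (a : W) (l : List W) (t : W) :
    cnt (a :: l) t = (if a = t then 1 else 0) + cnt l t := by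
  simp [cnt]

lemma mem_of_cnt_eq_one {l : List W} {t : W} (h : cnt l t = 1) : t ∈ l := by
  induction l with
  | nil => simp [cnt] at h
  | cons a l ih =>
    by_cases ha : a = t
    · exact ha ▸ List.mem_cons_self
    · rw [cnt_cons, if_neg ha, zero_add] at h
      exact List.mem_cons_of_mem a (ih h)

lemma q_shift (i j : B) (c : ℕ) (t : W) :
    σ i * (σ j * t * σ j) * σ i = (σ j * σ i) ^ c * σ j ↔
      t = (σ j * σ i) ^ (c + 2) * σ j := by
  have ha : σ i * (σ j * t * σ j) * σ i = (σ i * σ j) * t * (σ i * σ j)⁻¹ := by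
    simp [mul_assoc, mul_inv_rev]
  rw [ha, sandwich_iff]
  have hinv : (σ i * σ j)⁻¹ = σ j * σ i := by simp [mul_inv_rev]
  rw [hinv]
  have hkey : (σ j * σ i) * ((σ j * σ i) ^ c * σ j) * (σ i * σ j)
      = (σ j * σ i) ^ (c + 2) * σ j := by
    have h2 : (σ j * σ i) ^ (c + 2) = (σ j * σ i) * ((σ j * σ i) ^ c * (σ j * σ i)) := by
      rw [pow_succ, pow_succ']
      group
    rw [h2]
    group
  rw [hkey]

lemma tog_mul_pow_apply (i j : B) (m : ℕ) (t : W) (ε : ZMod 2) :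
    ((tog cs i * tog cs j) ^ m) (t, ε) =
      ((σ i * σ j) ^ m * t * (σ j * σ i) ^ m,
        ε + ∑ c ∈ Finset.range (2 * m),
          (if t = (σ j * σ i) ^ c * σ j then (1 : ZMod 2) else 0)) := by
  induction m generalizing t ε with
  | zero => simp
  | succ m ih =>
    have step : (tog cs i * tog cs j) (t, ε)
        = (σ i * (σ j * t * σ j) * σ i,
            ε + ((if t = (σ j * σ i) ^ 0 * σ j then (1 : ZMod 2) else 0)
              + (if t = (σ j * σ i) ^ 1 * σ j then (1 : ZMod 2) else 0))) := by
      rw [Equiv.Perm.mul_apply, tog_apply, tog_apply]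
      refine Prod.ext rfl ?_
      have h1 : (t = σ j) ↔ (t = (σ j * σ i) ^ 0 * σ j) := by
        rw [pow_zero, one_mul]
      have h2 : (σ j * t * σ j = σ i) ↔ (t = (σ j * σ i) ^ 1 * σ j) := by
        rw [pow_one]
        constructor
        · intro h
          rw [← h]
          simp [mul_assoc]
        · rintro rfl
          simp [mul_assoc]
      simp only [h1, h2]
      ring
    rw [pow_succ, Equiv.Perm.mul_apply, step, ih]
    refine Prod.ext ?_ ?_
    · show (σ i * σ j) ^ m * (σ i * (σ j * t * σ j) * σ i) * (σ j * σ i) ^ m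
        = (σ i * σ j) ^ (m + 1) * t * (σ j * σ i) ^ (m + 1)
      rw [pow_succ (σ i * σ j) m, pow_succ' (σ j * σ i) m]
      simp only [mul_assoc]
    · show (ε + _) + _ = ε + _
      -- reindex the sum
      have hsum : ∀ (u : W), (∑ c ∈ Finset.range (2 * m),
            (if (σ i * (σ j * u * σ j) * σ i) = (σ j * σ i) ^ c * σ j then (1 : ZMod 2) else 0))
          = ∑ c ∈ Finset.range (2 * m),
            (if u = (σ j * σ i) ^ (c + 2) * σ j then (1 : ZMod 2) else 0) := by
        intro u
        refine Finset.sum_congr rfl fun c _ => ?_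
        exact if_congr (q_shift cs i j c u) rfl rfl
      rw [hsum]
      have hshift : ∑ c ∈ Finset.range (2 * (m + 1)),
            (if t = (σ j * σ i) ^ c * σ j then (1 : ZMod 2) else 0)
          = ((if t = (σ j * σ i) ^ 0 * σ j then (1 : ZMod 2) else 0)
              + (if t = (σ j * σ i) ^ 1 * σ j then (1 : ZMod 2) else 0))
            + ∑ c ∈ Finset.range (2 * m),
              (if t = (σ j * σ i) ^ (c + 2) * σ j then (1 : ZMod 2) else 0) := by
        have h2m : 2 * (m + 1) = (2 * m) + 1 + 1 := by ring
        rw [h2m, Finset.sum_range_succ', Finset.sum_range_succ']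
        simp only [pow_zero, one_mul]
        ring
      rw [hshift]
      ring

noncomputable def togLiftable : {f : B → Equiv.Perm (W × ZMod 2) // M.IsLiftable f} := by
  refine ⟨fun i => tog cs i, fun i j => ?_⟩
  apply Equiv.ext
  rintro ⟨t, ε⟩
  rw [tog_mul_pow_apply, Equiv.Perm.one_apply]
  refine Prod.ext ?_ ?_
  · show (σ i * σ j) ^ M i j * t * (σ j * σ i) ^ M i j = t
    rw [cs.simple_mul_simple_pow i j, cs.simple_mul_simple_pow' i j, one_mul, mul_one]
  · show ε + ∑ c ∈ Finset.range (2 * M i j),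
        (if t = (σ j * σ i) ^ c * σ j then (1 : ZMod 2) else 0) = ε
    have hper : ∀ c, (if t = (σ j * σ i) ^ (M i j + c) * σ j then (1 : ZMod 2) else 0)
        = if t = (σ j * σ i) ^ c * σ j then (1 : ZMod 2) else 0 := by
      intro c
      have h : (σ j * σ i) ^ (M i j + c) = (σ j * σ i) ^ c := by
        rw [pow_add, cs.simple_mul_simple_pow' i j, one_mul]
      rw [h]
    rw [sum_range_two_mul (fun c => if t = (σ j * σ i) ^ c * σ j then (1 : ZMod 2) else 0) (M i j)]
    simp only [hper]
    rw [zmod2_add_self, add_zero]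

/-- The parity representation of `W` on `W × ZMod 2`. -/
noncomputable def psi : W →* Equiv.Perm (W × ZMod 2) := cs.lift (togLiftable cs)

lemma psi_simple (i : B) : psi cs (σ i) = tog cs i :=
  cs.lift_apply_simple (togLiftable cs).2 i

lemma psi_wordProd (ω : List B) (t : W) (ε : ZMod 2) :
    psi cs (π ω) (t, ε) = (π ω * t * (π ω)⁻¹, ε + cnt (cs.rightInvSeq ω) t) := by
  induction ω generalizing t ε with
  | nil => simp [psi]
  | cons a ω ih =>
    rw [cs.wordProd_cons, map_mul, Equiv.Perm.mul_apply, ih, psi_simple, tog_apply]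
    refine Prod.ext ?_ ?_
    · show σ a * (π ω * t * (π ω)⁻¹) * σ a = (σ a * π ω) * t * (σ a * π ω)⁻¹
      simp [mul_assoc, mul_inv_rev]
    · show (ε + cnt (cs.rightInvSeq ω) t) + (if π ω * t * (π ω)⁻¹ = σ a then (1 : ZMod 2) else 0)
        = ε + cnt (cs.rightInvSeq (a :: ω)) t
      have hris : cs.rightInvSeq (a :: ω) = ((π ω)⁻¹ * σ a * π ω) :: cs.rightInvSeq ω := rfl
      rw [hris, cnt_cons]
      have hiff : (π ω * t * (π ω)⁻¹ = σ a) ↔ ((π ω)⁻¹ * σ a * π ω = t) := by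
        rw [sandwich_iff]
        exact eq_comm
      rw [if_congr hiff rfl rfl]
      ring

/-- The parity cocycle. -/
noncomputable def eta (w t : W) : ZMod 2 := (psi cs w (t, 0)).2

lemma psi_apply_eq (w t : W) (ε : ZMod 2) :
    psi cs w (t, ε) = (w * t * w⁻¹, ε + eta cs w t) := by
  obtain ⟨ω, rfl⟩ := cs.wordProd_surjective w
  rw [psi_wordProd, eta, psi_wordProd]
  simp

lemma eta_one (t : W) : eta cs 1 t = 0 := by
  simp [eta]

lemma eta_mul (a b t : W) :
    eta cs (a * b) t = eta cs b t + eta cs a (b * t * b⁻¹) := by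
  calc eta cs (a * b) t = (psi cs (a * b) (t, 0)).2 := rfl
  _ = (psi cs a (psi cs b (t, 0))).2 := by rw [map_mul]; rfl
  _ = (psi cs a ((b * t * b⁻¹, eta cs b t) : W × ZMod 2)).2 := by
      rw [psi_apply_eq cs b t 0, zero_add]
  _ = eta cs b t + eta cs a (b * t * b⁻¹) := by rw [psi_apply_eq]

lemma eta_wordProd (ω : List B) (t : W) : eta cs (π ω) t = cnt (cs.rightInvSeq ω) t := by
  rw [eta, psi_wordProd]
  simp

lemma eta_simple (i : B) (t : W) : eta cs (σ i) t = if t = σ i then 1 else 0 := by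
  have h := eta_wordProd cs [i] t
  rw [cs.wordProd_singleton, cs.rightInvSeq_singleton] at h
  rw [h, cnt_cons, cnt_nil, add_zero, if_congr (eq_comm) rfl rfl]

lemma lt_of_eta_eq_one {w t : W} (h : eta cs w t = 1) : ℓ (w * t) < ℓ w := by
  obtain ⟨ω, hlen, rfl⟩ := cs.exists_reduced_word w
  rw [eta_wordProd] at h
  have hmem : t ∈ cs.rightInvSeq ω := mem_of_cnt_eq_one h
  obtain ⟨k, hk, hkt⟩ := List.mem_iff_getElem.mp hmem
  have hk' : k < ω.length := by simpa using hk
  have heq : π ω * t = π (ω.eraseIdx k) := by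
    rw [← hkt, ← List.getD_eq_getElem _ 1 hk, cs.wordProd_mul_getD_rightInvSeq]
  rw [heq]
  calc ℓ (π (ω.eraseIdx k)) ≤ (ω.eraseIdx k).length := cs.length_wordProd_le _
  _ < ω.length := by
      have := List.length_eraseIdx_add_one hk'
      omega
  _ = ℓ (π ω) := hlen.symm

lemma eta_refl {t : W} (ht : cs.IsReflection t) : eta cs t t = 1 := by
  obtain ⟨u, i, rfl⟩ := ht
  have harg : u⁻¹ * (u * σ i * u⁻¹) * u⁻¹⁻¹ = σ i := by group
  have h0 : eta cs u⁻¹ (u * σ i * u⁻¹) + eta cs u (σ i) = 0 := by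
    have h := eta_mul cs u u⁻¹ (u * σ i * u⁻¹)
    rw [mul_inv_cancel, eta_one, harg] at h
    exact h.symm
  have h2 : eta cs (u * σ i * u⁻¹) (u * σ i * u⁻¹)
      = eta cs u⁻¹ (u * σ i * u⁻¹) + eta cs (u * σ i) (σ i) := by
    have h := eta_mul cs (u * σ i) u⁻¹ (u * σ i * u⁻¹)
    rw [harg] at h
    exact h
  have h3 : eta cs (u * σ i) (σ i) = 1 + eta cs u (σ i) := by
    have h := eta_mul cs u (σ i) (σ i)
    have harg2 : σ i * σ i * (σ i)⁻¹ = σ i := by simp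
    rw [harg2, eta_simple, if_pos rfl] at h
    exact h
  rw [h2, h3]
  have hz : ∀ a b : ZMod 2, a + b = 0 → a + (1 + b) = 1 := by decide
  exact hz _ _ h0

lemma eta_eq_one_iff {w t : W} (ht : cs.IsReflection t) :
    eta cs w t = 1 ↔ ℓ (w * t) < ℓ w := by
  refine ⟨lt_of_eta_eq_one cs, fun hlt => ?_⟩
  have hw : w = (w * t) * t := by rw [mul_assoc, ht.mul_self, mul_one]
  have h := eta_mul cs (w * t) t t
  rw [← hw] at h
  have harg : t * t * t⁻¹ = t := by rw [ht.mul_self, one_mul, ht.inv]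
  rw [harg, eta_refl cs ht] at h
  rcases zmod2_cases (eta cs (w * t) t) with h0 | h1
  · rw [h0, add_zero] at h
    exact h
  · exfalso
    have hlt2 := lt_of_eta_eq_one cs h1
    rw [mul_assoc, ht.mul_self, mul_one] at hlt2
    exact absurd hlt (not_lt.mpr hlt2.le)

lemma eta_conj_self {w : W} (hw : w * w = 1) (t : W) :
    eta cs w (w * t * w⁻¹) = eta cs w t := by
  have h := eta_mul cs w w t
  rw [hw, eta_one] at h
  have hz : ∀ a b : ZMod 2, 0 = a + b → b = a := by decide
  exact hz _ _ h

lemma inv_eq_self {w : W} (hw : w * w = 1) : w⁻¹ = w := inv_eq_of_mul_eq_one_right hw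

lemma isRightDescent_iff_eta (w : W) (i : B) :
    cs.IsRightDescent w i ↔ eta cs w (σ i) = 1 :=
  (eta_eq_one_iff cs (cs.isReflection_simple i)).symm

lemma move_down {w : W} (hw : w * w = 1) {j : B} (hd : cs.IsRightDescent w j)
    (hne : w * σ j * w⁻¹ ≠ σ j) :
    ℓ (σ j * w * σ j) < ℓ w := by
  have hwinv : w⁻¹ = w := inv_eq_self hw
  have h1 : eta cs (σ j * w) (σ j) = 1 := by
    have h := eta_mul cs (σ j) w (σ j)
    rw [eta_simple cs j (w * σ j * w⁻¹), if_neg hne, add_zero,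
      (isRightDescent_iff_eta cs w j).mp hd] at h
    exact h
  have h2 : ℓ ((σ j * w) * σ j) < ℓ (σ j * w) := lt_of_eta_eq_one cs h1
  have h3 : ℓ (σ j * w) = ℓ (w * σ j) := by
    conv_lhs => rw [← cs.length_inv]
    rw [mul_inv_rev, hwinv, cs.inv_simple]
  calc ℓ (σ j * w * σ j) < ℓ (σ j * w) := h2
  _ = ℓ (w * σ j) := h3
  _ < ℓ w := hd

lemma exists_word_of_mem_closure {S : Set B} {h : W}
    (hh : h ∈ Subgroup.closure (cs.simple '' S)) :
    ∃ ω : List B, (∀ j ∈ ω, j ∈ S) ∧ π ω = h := by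
  induction hh using Subgroup.closure_induction with
  | mem x hx =>
    obtain ⟨j, hj, rfl⟩ := hx
    exact ⟨[j], by simpa using hj, by simp⟩
  | one => exact ⟨[], by simp, by simp⟩
  | mul x y hx hy ihx ihy =>
    obtain ⟨ω₁, h1, rfl⟩ := ihx
    obtain ⟨ω₂, h2, rfl⟩ := ihy
    refine ⟨ω₁ ++ ω₂, ?_, by rw [cs.wordProd_append]⟩
    intro j hj
    rcases List.mem_append.mp hj with h | h
    exacts [h1 j h, h2 j h]
  | inv x hx ihx =>
    obtain ⟨ω, h1, rfl⟩ := ihx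
    exact ⟨ω.reverse, fun j hj => h1 j (List.mem_reverse.mp hj), by simp⟩

lemma wordProd_mem_closure {S : Set B} {ω : List B} (hω : ∀ j ∈ ω, j ∈ S) :
    π ω ∈ Subgroup.closure (cs.simple '' S) := by
  induction ω with
  | nil => rw [cs.wordProd_nil]; exact one_mem _
  | cons a ω ih =>
    rw [cs.wordProd_cons]
    exact mul_mem (Subgroup.subset_closure ⟨a, hω a List.mem_cons_self, rfl⟩)
      (ih fun j hj => hω j (List.mem_cons_of_mem a hj))

lemma centralizes_of_closure {S : Set B} {w : W} (hc : ∀ j ∈ S, w * σ j * w⁻¹ = σ j) :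
    ∀ h ∈ Subgroup.closure (cs.simple '' S), w * h * w⁻¹ = h := by
  intro h hh
  induction hh using Subgroup.closure_induction with
  | mem x hx =>
    obtain ⟨j, hj, rfl⟩ := hx
    exact hc j hj
  | one => simp
  | mul x y hx hy ihx ihy =>
    calc w * (x * y) * w⁻¹ = (w * x * w⁻¹) * (w * y * w⁻¹) := by group
    _ = x * y := by rw [ihx, ihy]
  | inv x hx ihx =>
    calc w * x⁻¹ * w⁻¹ = (w * x * w⁻¹)⁻¹ := by group
    _ = x⁻¹ := by rw [ihx]

lemma eta_conj_gen {S : Set B} {w : W} (hc : ∀ j ∈ S, w * σ j * w⁻¹ = σ j)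
    (hd : ∀ j ∈ S, eta cs w (σ j) = 1)
    {h : W} (hh : h ∈ Subgroup.closure (cs.simple '' S)) {j : B} (hj : j ∈ S) :
    eta cs w (h * σ j * h⁻¹) = 1 := by
  have hcomm := centralizes_of_closure cs hc h hh
  have hcm : w * h = h * w := by
    have h2 := congrArg (· * w) hcomm
    simpa [mul_assoc] using h2
  have h1 := eta_mul cs w h (σ j)
  have h2 := eta_mul cs h w (σ j)
  rw [hc j hj, hd j hj] at h2
  rw [hcm, h2] at h1
  have hz : ∀ a b : ZMod 2, 1 + a = a + b → b = 1 := by decide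
  exact hz _ _ h1

variable [Finite W]

lemma terminal_case {w : W} (hw : w * w = 1)
    (hterm : ∀ j, cs.IsRightDescent w j → w * σ j * w⁻¹ = σ j) :
    w ∈ Subgroup.closure (cs.simple '' {j | cs.IsRightDescent w j}) ∧
      ∀ u ∈ Subgroup.closure (cs.simple '' {j | cs.IsRightDescent w j}), ℓ u ≤ ℓ w := by
  have hwinv : w⁻¹ = w := inv_eq_self hw
  have hcgen : ∀ j ∈ {j | cs.IsRightDescent w j}, w * σ j * w⁻¹ = σ j := fun j hj => hterm j hj
  have hdgen : ∀ j ∈ {j | cs.IsRightDescent w j}, eta cs w (σ j) = 1 := fun j hj =>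
    (isRightDescent_iff_eta cs w j).mp hj
  -- a maximal-length element of the parabolic subgroup
  obtain ⟨v, hvH, hvmax⟩ : ∃ v ∈ Subgroup.closure (cs.simple '' {j | cs.IsRightDescent w j}),
      ∀ u ∈ Subgroup.closure (cs.simple '' {j | cs.IsRightDescent w j}), ℓ u ≤ ℓ v := by
    obtain ⟨v, hvH, hmax⟩ := Set.Finite.exists_maximalFor cs.length
      ((Subgroup.closure (cs.simple '' {j | cs.IsRightDescent w j}) : Set W))
      (Set.toFinite _) ⟨1, one_mem _⟩
    refine ⟨v, hvH, fun u hu => ?_⟩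
    by_contra hlt
    push_neg at hlt
    exact absurd (hmax hu hlt.le) (not_le.mpr hlt)
  -- every inversion of v is a parabolic conjugate of a parabolic simple reflection
  have hNv : ∀ t : W, eta cs v t = 1 →
      ∃ h ∈ Subgroup.closure (cs.simple '' {j | cs.IsRightDescent w j}),
        ∃ j, cs.IsRightDescent w j ∧ t = h * σ j * h⁻¹ := by
    intro t htv
    obtain ⟨ω, hωPa, hωv⟩ := exists_word_of_mem_closure cs hvH
    rw [← hωv, eta_wordProd] at htv
    obtain ⟨k, hk, hkt⟩ := List.mem_iff_getElem.mp (mem_of_cnt_eq_one htv)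
    have hk' : k < ω.length := by simpa using hk
    have hform := cs.getD_rightInvSeq ω k
    rw [List.getElem?_eq_getElem hk'] at hform
    simp only [Option.map_some, Option.getD_some] at hform
    have ht : t = (π (ω.drop (k + 1)))⁻¹ * σ (ω[k]) * π (ω.drop (k + 1)) := by
      rw [← hkt, ← List.getD_eq_getElem _ 1 hk, hform]
    refine ⟨(π (ω.drop (k + 1)))⁻¹, ?_, ω[k], hωPa _ (List.getElem_mem hk'), ?_⟩
    · exact inv_mem (wordProd_mem_closure cs
        (fun j hj => hωPa j (List.mem_of_mem_drop hj)))
    · rw [ht, inv_inv]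
  -- parabolic reflections are inversions of v (by maximality)
  have hRHNv : ∀ t : W, t ∈ Subgroup.closure (cs.simple '' {j | cs.IsRightDescent w j}) →
      cs.IsReflection t → ℓ (v * t) < ℓ v := by
    intro t htH htrefl
    exact lt_of_le_of_ne (hvmax _ (mul_mem hvH htH)) (htrefl.length_mul_left_ne v)
  -- parabolic conjugates of parabolic simples are inversions of w
  have hRHw : ∀ (h : W), h ∈ Subgroup.closure (cs.simple '' {j | cs.IsRightDescent w j}) →
      ∀ (j : B), cs.IsRightDescent w j → eta cs w (h * σ j * h⁻¹) = 1 := by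
    intro h hh j hj
    exact eta_conj_gen cs hcgen hdgen hh hj
  -- the core argument: w * v = 1
  have hvw : w * v = v * w := by
    have h2 := congrArg (· * w) (centralizes_of_closure cs hcgen v hvH)
    simpa [mul_assoc] using h2
  have hx : w * v = 1 := by
    by_contra hne
    obtain ⟨k, hk⟩ := cs.exists_rightDescent_of_ne_one hne
    have hketa : eta cs (w * v) (σ k) = 1 := (isRightDescent_iff_eta cs _ k).mp hk
    rw [hvw] at hketa
    have h1 := eta_mul cs v w (σ k)
    by_cases hkw : cs.IsRightDescent w k
    · have hsk : eta cs v (σ k) = 1 := by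
        refine (eta_eq_one_iff cs (cs.isReflection_simple k)).mpr ?_
        exact hRHNv (σ k) (Subgroup.subset_closure ⟨k, hkw, rfl⟩) (cs.isReflection_simple k)
      rw [hterm k hkw, hdgen k hkw, hsk] at h1
      rw [h1] at hketa
      exact absurd hketa (by decide)
    · have hwk0 : eta cs w (σ k) = 0 := by
        rcases zmod2_cases (eta cs w (σ k)) with h | h
        · exact h
        · exact absurd ((isRightDescent_iff_eta cs w k).mpr h) hkw
      rw [hwk0, zero_add] at h1
      rw [h1] at hketa
      obtain ⟨h, hhH, j, hjPa, hteq⟩ := hNv _ hketa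
      have hcontr : eta cs w (w * σ k * w⁻¹) = 1 := by
        rw [hteq]
        exact hRHw h hhH j hjPa
      rw [eta_conj_self cs hw, hwk0] at hcontr
      exact absurd hcontr (by decide)
  have hwv : w = v⁻¹ := eq_inv_of_mul_eq_one_left hx
  constructor
  · have hmem : v⁻¹ ∈ Subgroup.closure (cs.simple '' {j | cs.IsRightDescent w j}) := inv_mem hvH
    rwa [← hwv] at hmem
  · intro u hu
    calc ℓ u ≤ ℓ v := hvmax u hu
    _ = ℓ v⁻¹ := (cs.length_inv v).symm
    _ = ℓ w := by rw [← hwv]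

lemma main_aux : ∀ n : ℕ, ∀ w : W, w * w = 1 → ℓ w = n →
    ∃ w' : W,
      Relation.ReflTransGen
        (fun u v => ∃ i : B, v = cs.simple i * u * cs.simple i ∧
          u * cs.simple i * u⁻¹ ≠ cs.simple i) w w' ∧
      w' * w' = 1 ∧
      ∃ Pa : Set B,
        w' ∈ Subgroup.closure (cs.simple '' Pa) ∧
        (∀ u ∈ Subgroup.closure (cs.simple '' Pa), cs.length u ≤ cs.length w') ∧
        ∀ i ∈ Pa, w' * cs.simple i * w'⁻¹ = cs.simple i ∧
          cs.length (w' * cs.simple i) < cs.length w' := by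
  intro n
  induction n using Nat.strong_induction_on with
  | _ n ih =>
    intro w hw hlen
    by_cases hterm : ∀ j, cs.IsRightDescent w j → w * σ j * w⁻¹ = σ j
    · refine ⟨w, Relation.ReflTransGen.refl, hw, {j | cs.IsRightDescent w j},
        (terminal_case cs hw hterm).1, (terminal_case cs hw hterm).2, ?_⟩
      intro i hi
      exact ⟨hterm i hi, hi⟩
    · push_neg at hterm
      obtain ⟨j, hdj, hne⟩ := hterm
      have hlt : ℓ (σ j * w * σ j) < n := hlen ▸ move_down cs hw hdj hne
      have hv : (σ j * w * σ j) * (σ j * w * σ j) = 1 := by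
        have h1 : (σ j * w * σ j) * (σ j * w * σ j) = σ j * ((w * w) * σ j) := by
          simp [mul_assoc]
        rw [h1, hw, one_mul, cs.simple_mul_simple_self]
      obtain ⟨w', hpath, hrest⟩ := ih (ℓ (σ j * w * σ j)) hlt (σ j * w * σ j) hv rfl
      exact ⟨w', Relation.ReflTransGen.head ⟨j, rfl, hne⟩ hpath, hrest⟩

end SpringerStmt4

/-- Springer: in a finite Weyl group (a finite crystallographic Coxeter
group), every involution is connected, in the graph on involutions with edges
`w → s_α w s_α` whenever `wα ≠ ±α` (equivalently `w s_α w⁻¹ ≠ s_α`), to a minimal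
involution, i.e. to the longest element `w'` of a standard parabolic subgroup generated
by `{s_α : α ∈ Pa}` satisfying `w'α = −α` for all `α ∈ Pa` (equivalently
`w' s_α w'⁻¹ = s_α` and `ℓ(w' s_α) < ℓ(w')`). -/
theorem stmt_4 {B W : Type*} [Group W] [Finite W] (M : CoxeterMatrix B)
    (cs : CoxeterSystem M W) (hcrys : ∀ i j : B, M i j ∈ ({1, 2, 3, 4, 6} : Set ℕ))
    (w : W) (hw : w * w = 1) :
    ∃ w' : W,
      Relation.ReflTransGen
        (fun u v => ∃ i : B, v = cs.simple i * u * cs.simple i ∧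
          u * cs.simple i * u⁻¹ ≠ cs.simple i) w w' ∧
      w' * w' = 1 ∧
      ∃ Pa : Set B,
        w' ∈ Subgroup.closure (cs.simple '' Pa) ∧
        (∀ u ∈ Subgroup.closure (cs.simple '' Pa), cs.length u ≤ cs.length w') ∧
        ∀ i ∈ Pa, w' * cs.simple i * w'⁻¹ = cs.simple i ∧
          cs.length (w' * cs.simple i) < cs.length w' := by
  exact SpringerStmt4.main_aux cs (cs.length w) w hw rfl
end

section
/- Consider the sign-deletion graph E on tuples of signs (edge e →^i e' deletes two adjacent equal entries at positions i, i+1). For a path starting at e ∈ {±1}^k with edge-label pattern (i₁,…,i_t), define its coordinate history ((x₁,y₁),…,(x_t,y_t)), where x_s < y_s are the coordinates of the original tuple e deleted at step s (defined recursively: (x₁,y₁)=(i₁,i₁+1), and at step s, if z₁<⋯<z_{k−2(s−1)} enumerate the surviving coordinates, then x_s = z_{i_s}, y_s = z_{i_s+1}). Then the history is non-crossing: there are no indices i, j with x_i < x_j < y_i < y_j. -/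
/-- The alternating sign tuple `f_t = (1, −1, 1, …, (−1)^{t−1})`, with `+1 = true`. -/
def falt (t : ℕ) : List Bool := (List.range t).map fun j => decide (j % 2 = 0)

/-- Negation of a sign tuple. -/
def negT (l : List Bool) : List Bool := l.map not

/-- `Edge l i l'`: the edge labeled `i` (1-indexed) of the sign-deletion graph; it requires
`1 ≤ i ≤ k−1`, `e_i = e_{i+1}`, and deletes the `i`-th and `(i+1)`-th entries of `l`. -/
def Edge (l : List Bool) (i : ℕ) (l' : List Bool) : Prop :=
  1 ≤ i ∧ i + 1 ≤ l.length ∧ l[i - 1]? = l[i]? ∧ l' = l.take (i - 1) ++ l.drop (i + 1)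

/-- `PathP l pat l'`: a path from `l` to `l'` in the sign-deletion graph whose sequence
of edge labels (its pattern) is `pat`. -/
inductive PathP : List Bool → List ℕ → List Bool → Prop where
  | nil (l : List Bool) : PathP l [] l
  | cons {l l' l'' : List Bool} {i : ℕ} {is : List ℕ} :
      Edge l i l' → PathP l' is l'' → PathP l (i :: is) l''

/-- Auxiliary for the coordinate history: `coords` is the increasing list of surviving
original (1-indexed) coordinates; at each step the pair at (1-indexed) positions
`i, i+1` of `coords` is recorded and removed. -/
def histAux : List ℕ → List ℕ → List (ℕ × ℕ)
  | _, [] => []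
  | coords, i :: is =>
      (coords.getD (i - 1) 0, coords.getD i 0) ::
        histAux (coords.take (i - 1) ++ coords.drop (i + 1)) is

/-- The coordinate history `((x₁,y₁),…,(x_t,y_t))` of a path with pattern `pat` starting
at a tuple of length `k` (coordinates are 1-indexed). -/
def hist (k : ℕ) (pat : List ℕ) : List (ℕ × ℕ) :=
  histAux ((List.range k).map (· + 1)) pat

/-- Validity of a pattern for a tuple of length `k`. -/
def Valid : ℕ → List ℕ → Prop
  | _, [] => True
  | k, i :: is => 1 ≤ i ∧ i + 1 ≤ k ∧ Valid (k - 2) is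

lemma edge_length {l l' : List Bool} {i : ℕ} (h : Edge l i l') :
    l'.length = l.length - 2 := by
  obtain ⟨h1, h2, _, h4⟩ := h
  subst h4
  simp only [List.length_append, List.length_take, List.length_drop]
  omega

lemma pathP_valid {l l' : List Bool} {pat : List ℕ} (h : PathP l pat l') :
    Valid l.length pat := by
  induction h with
  | nil => trivial
  | cons he _ ih =>
    exact ⟨he.1, he.2.1, by rwa [← edge_length he]⟩

lemma newc_length {c : List ℕ} {i : ℕ} (h1 : 1 ≤ i) (h2 : i + 1 ≤ c.length) :
    (c.take (i - 1) ++ c.drop (i + 1)).length = c.length - 2 := by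
  simp only [List.length_append, List.length_take, List.length_drop]
  omega

lemma newc_sublist (c : List ℕ) {i : ℕ} (h1 : 1 ≤ i) :
    List.Sublist (c.take (i - 1) ++ c.drop (i + 1)) c := by
  have hd : List.Sublist (c.drop (i + 1)) (c.drop (i - 1)) := by
    have : c.drop (i + 1) = (c.drop (i - 1)).drop 2 := by
      rw [List.drop_drop]; congr 1; omega
    rw [this]
    exact List.drop_sublist 2 _
  have h := hd.append_left (c.take (i - 1))
  rwa [List.take_append_drop] at h

lemma mem_take_lt {c : List ℕ} (hs : c.Pairwise (· < ·)) {j : ℕ} (hj : j < c.length)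
    {x : ℕ} (hx : x ∈ c.take j) : x < c.getD j 0 := by
  rw [List.mem_iff_getElem] at hx
  obtain ⟨m, hm, rfl⟩ := hx
  have hm' : m < j := lt_of_lt_of_le hm (by simp)
  rw [List.getElem_take, List.getD_eq_getElem c 0 hj]
  exact (List.pairwise_iff_getElem.mp hs) m j (by omega) hj hm'

lemma mem_drop_gt {c : List ℕ} (hs : c.Pairwise (· < ·)) {j : ℕ} (hj : j < c.length)
    {x : ℕ} (hx : x ∈ c.drop (j + 1)) : c.getD j 0 < x := by
  rw [List.mem_iff_getElem] at hx
  obtain ⟨m, hm, rfl⟩ := hx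
  have hm' : j + 1 + m < c.length := by
    have := hm; simp only [List.length_drop] at this; omega
  rw [List.getElem_drop, List.getD_eq_getElem c 0 hj]
  exact (List.pairwise_iff_getElem.mp hs) j (j + 1 + m) hj hm' (by omega)

lemma histAux_length (pat : List ℕ) : ∀ c, (histAux c pat).length = pat.length := by
  induction pat with
  | nil => intro c; rfl
  | cons i is ih => intro c; simp [histAux, ih]

lemma histAux_mem {pat : List ℕ} :
    ∀ {c : List ℕ}, Valid c.length pat → ∀ {b : ℕ}, b < pat.length →
      ((histAux c pat).getD b (0, 0)).1 ∈ c ∧ ((histAux c pat).getD b (0, 0)).2 ∈ c := by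
  induction pat with
  | nil => intro c _ b hb; simp at hb
  | cons i is ih =>
    intro c hv b hb
    obtain ⟨h1, h2, h3⟩ := hv
    match b with
    | 0 =>
      simp only [histAux, List.getD_cons_zero]
      constructor
      · rw [List.getD_eq_getElem c 0 (by omega)]; exact List.getElem_mem _
      · rw [List.getD_eq_getElem c 0 (by omega)]; exact List.getElem_mem _
    | b + 1 =>
      have hv' : Valid (c.take (i - 1) ++ c.drop (i + 1)).length is := by
        rwa [newc_length h1 h2]
      have hb' : b < is.length := by simpa using hb
      have := ih hv' hb'
      simp only [histAux, List.getD_cons_succ]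
      exact ⟨(newc_sublist c h1).mem this.1, (newc_sublist c h1).mem this.2⟩

lemma key {pat : List ℕ} :
    ∀ {c : List ℕ}, c.Pairwise (· < ·) → Valid c.length pat →
      ∀ {a b : ℕ}, a < b → b < pat.length →
      ∀ z, (z = ((histAux c pat).getD b (0, 0)).1 ∨ z = ((histAux c pat).getD b (0, 0)).2) →
        z < ((histAux c pat).getD a (0, 0)).1 ∨ ((histAux c pat).getD a (0, 0)).2 < z := by
  induction pat with
  | nil => intro c _ _ a b _ hb; simp at hb
  | cons i is ih =>
    intro c hs hv a b hab hb z hz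
    obtain ⟨h1, h2, h3⟩ := hv
    set c' := c.take (i - 1) ++ c.drop (i + 1) with hc'
    have hs' : c'.Pairwise (· < ·) := hs.sublist (newc_sublist c h1)
    have hv' : Valid c'.length is := by rw [hc', newc_length h1 h2]; exact h3
    match a, b with
    | 0, b + 1 =>
      have hb' : b < is.length := by simpa using hb
      -- z is a member of c'
      have hz' : z ∈ c' := by
        have := histAux_mem hv' hb'
        simp only [histAux, List.getD_cons_succ] at hz
        rcases hz with rfl | rfl
        exacts [this.1, this.2]
      simp only [histAux, List.getD_cons_zero]
      rw [List.mem_append] at hz'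
      rcases hz' with h | h
      · left; exact mem_take_lt hs (by omega) h
      · right; exact mem_drop_gt hs (by omega) h
    | a + 1, b + 1 =>
      have hab' : a < b := by omega
      have hb' : b < is.length := by simpa using hb
      simp only [histAux, List.getD_cons_succ] at hz ⊢
      exact ih hs' hv' hab' hb' z hz

lemma init_sorted (k : ℕ) : ((List.range k).map (· + 1)).Pairwise (· < ·) := by
  rw [List.pairwise_map]
  exact (List.pairwise_lt_range (n := k)).imp (by omega)

/-- the coordinate history of a path in the sign-deletion graph is
non-crossing: there are no steps `a`, `b` with `x_a < x_b < y_a < y_b`. -/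
theorem stmt_8 (e e' : List Bool) (pat : List ℕ) (hp : PathP e pat e')
    (a b : ℕ) (ha : a < pat.length) (hb : b < pat.length) :
    ¬ (((hist e.length pat).getD a (0, 0)).1 < ((hist e.length pat).getD b (0, 0)).1 ∧
       ((hist e.length pat).getD b (0, 0)).1 < ((hist e.length pat).getD a (0, 0)).2 ∧
       ((hist e.length pat).getD a (0, 0)).2 < ((hist e.length pat).getD b (0, 0)).2) := by
  rintro ⟨h1, h2, h3⟩
  have hv : Valid ((List.range e.length).map (· + 1)).length pat := by
    simpa using pathP_valid hp
  have hs := init_sorted e.length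
  unfold hist at h1 h2 h3
  rcases lt_trichotomy a b with h | rfl | h
  · rcases key hs hv h hb _ (Or.inl rfl) with h' | h' <;> omega
  · omega
  · rcases key hs hv h ha _ (Or.inr rfl) with h' | h' <;> omega
end

section
/- With the same setup of the sign-deletion graph and the coordinate history ((x₁,y₁),…,(x_t,y_t)) of a path starting at e ∈ {±1}^k: for every i with 2 ≤ i ≤ t, the interval of integers [x_i + 1, y_i − 1] is contained in the set {x_j, y_j : 1 ≤ j ≤ i−1} of coordinates deleted at earlier steps. -/
lemma stmt9_aux : ∀ {l e' : List Bool} {pat : List ℕ}, PathP l pat e' →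
    ∀ (coords : List ℕ) (D : ℕ → Prop),
    coords.length = l.length →
    coords.Pairwise (· < ·) →
    (∀ m a b, a ∈ coords → b ∈ coords → a < m → m < b → m ∈ coords ∨ D m) →
    ∀ s, s < pat.length → ∀ m,
      ((histAux coords pat).getD s (0,0)).1 < m →
      m < ((histAux coords pat).getD s (0,0)).2 →
      (∃ j < s, m = ((histAux coords pat).getD j (0,0)).1 ∨
                m = ((histAux coords pat).getD j (0,0)).2) ∨ D m := by
  intro l e' pat hp
  induction hp with
  | nil l => intro _ _ _ _ _ s hs; simp at hs
  | @cons l l' l'' i is hedge hrest ih =>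
    intro coords D hlen hsort hD s hs m hm1 hm2
    obtain ⟨hi1, hi2, _, hl'⟩ := hedge
    have hi2' : i < coords.length := by omega
    have hi1' : i - 1 < coords.length := by omega
    have hgd1 : coords.getD (i - 1) 0 = coords[i - 1] := List.getD_eq_getElem coords 0 hi1'
    have hgd2 : coords.getD i 0 = coords[i] := List.getD_eq_getElem coords 0 hi2'
    have hdecomp : coords =
        coords.take (i - 1) ++ coords[i - 1] :: coords[i] :: coords.drop (i + 1) := by
      conv_lhs => rw [← List.take_append_drop (i - 1) coords]
      congr 1
      rw [List.drop_eq_getElem_cons hi1']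
      congr 1
      have : i - 1 + 1 = i := by omega
      rw [this, List.drop_eq_getElem_cons hi2']
    set coords' := coords.take (i - 1) ++ coords.drop (i + 1) with hc'
    have hmem : ∀ x, x ∈ coords ↔ x ∈ coords' ∨ x = coords[i - 1] ∨ x = coords[i] := by
      intro x
      constructor
      · intro hx
        rw [hdecomp] at hx
        simp only [List.mem_append, List.mem_cons] at hx
        simp only [hc', List.mem_append]
        tauto
      · intro hx
        rw [hdecomp]
        simp only [List.mem_append, List.mem_cons]
        simp only [hc', List.mem_append] at hx
        tauto
    have hsub : coords'.Sublist coords := by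
      conv_rhs => rw [← List.take_append_drop (i - 1) coords]
      refine List.Sublist.append_left ?_ _
      have : coords.drop (i + 1) = (coords.drop (i - 1)).drop 2 := by
        rw [List.drop_drop]; congr 1; omega
      rw [this]
      exact List.drop_sublist _ _
    have hmono := hsort.sortedLT.strictMono_get
    match s with
    | 0 =>
      simp only [histAux, List.getD_cons_zero] at hm1 hm2
      rw [hgd1] at hm1; rw [hgd2] at hm2
      have := hD m coords[i-1] coords[i] (List.getElem_mem hi1') (List.getElem_mem hi2') hm1 hm2
      rcases this with hmc | hdm
      · exfalso
        obtain ⟨p, hp, hpe⟩ := List.mem_iff_getElem.mp hmc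
        have h1 : i - 1 < p := by
          have := hmono.lt_iff_lt (a := ⟨i-1, hi1'⟩) (b := ⟨p, hp⟩)
          simp only [List.get_eq_getElem] at this
          exact this.mp (by rw [hpe]; exact hm1)
        have h2 : p < i := by
          have := hmono.lt_iff_lt (a := ⟨p, hp⟩) (b := ⟨i, hi2'⟩)
          simp only [List.get_eq_getElem] at this
          exact this.mp (by rw [hpe]; exact hm2)
        omega
      · exact Or.inr hdm
    | s' + 1 =>
      simp only [histAux, List.getD_cons_succ] at hm1 hm2 ⊢
      have hlen' : coords'.length = l'.length := by
        rw [hl']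
        simp only [hc', List.length_append, List.length_take, List.length_drop]
        omega
      have hsort' : coords'.Pairwise (· < ·) := hsort.sublist hsub
      have hD' : ∀ x a b, a ∈ coords' → b ∈ coords' → a < x → x < b →
          x ∈ coords' ∨ (D x ∨ x = coords[i-1] ∨ x = coords[i]) := by
        intro x a b ha hb hax hxb
        have := hD x a b (hsub.mem ha) (hsub.mem hb) hax hxb
        rcases this with hx | hx
        · rcases (hmem x).mp hx with h | h
          · exact Or.inl h
          · exact Or.inr (Or.inr h)
        · exact Or.inr (Or.inl hx)
      have := ih coords' (fun x => D x ∨ x = coords[i-1] ∨ x = coords[i])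
        hlen' hsort' hD' s' (by simpa using hs) m hm1 hm2
      rcases this with ⟨j, hj, hjm⟩ | hdm | hm | hm
      · exact Or.inl ⟨j + 1, by omega, by simpa [histAux] using hjm⟩
      · exact Or.inr hdm
      · refine Or.inl ⟨0, by omega, Or.inl ?_⟩
        simp only [histAux, List.getD_cons_zero]
        rw [hgd1]; exact hm
      · refine Or.inl ⟨0, by omega, Or.inr ?_⟩
        simp only [histAux, List.getD_cons_zero]
        rw [hgd2]; exact hm

/-- in the coordinate history of a path, every coordinate strictly between
`x_s` and `y_s` was deleted at an earlier step (here steps are 0-indexed, so the paper's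
`2 ≤ i ≤ t` becomes `1 ≤ s < t`). -/
theorem stmt_9 (e e' : List Bool) (pat : List ℕ) (hp : PathP e pat e')
    (s : ℕ) (hs1 : 1 ≤ s) (hs2 : s < pat.length) (m : ℕ)
    (hm1 : ((hist e.length pat).getD s (0, 0)).1 < m)
    (hm2 : m < ((hist e.length pat).getD s (0, 0)).2) :
    ∃ j < s, m = ((hist e.length pat).getD j (0, 0)).1 ∨
      m = ((hist e.length pat).getD j (0, 0)).2 := by
  have hres := stmt9_aux hp ((List.range e.length).map (· + 1)) (fun _ => False)
    (by simp) ?_ ?_ s hs2 m hm1 hm2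
  · rcases hres with h | h
    · exact h
    · exact absurd h (by simp)
  · exact List.Pairwise.map _ (fun a b h => by omega) (List.pairwise_lt_range (n := e.length))
  · intro x a b ha hb hax hxb
    simp only [List.mem_map, List.mem_range] at ha hb ⊢
    left
    obtain ⟨a', ha', rfl⟩ := ha
    obtain ⟨b', hb', rfl⟩ := hb
    exact ⟨x - 1, by omega, by omega⟩
end

section
/- In the sign-deletion graph E on the set V of all finite tuples of signs, the sets V_t (t ∈ ℤ), where V_t consists of the tuples admitting a path to the alternating tuple sign(t)·f_{|t|}, are pairwise disjoint and their union is all of V. Consequently, for each e ∈ V there is exactly one t ∈ ℤ with e ∈ V_t, and the full subgraphs on the V_t are the connected components of the underlying undirected reachability structure. -/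
/-- The terminal vertex `sign(t)·f_{|t|}` attached to `t ∈ ℤ`. -/
def target (t : ℤ) : List Bool := if 0 ≤ t then falt t.toNat else negT (falt (-t).toNat)

/-- `V_t`: the set of sign tuples admitting a path to `sign(t)·f_{|t|}`. -/
def Vmem (t : ℤ) (l : List Bool) : Prop := ∃ pat : List ℕ, PathP l pat (target t)

/- auxiliary development -/

def step (a : Bool) : List Bool → List Bool
  | [] => [a]
  | b :: r => if a = b then r else a :: b :: r

def red : List Bool → List Bool
  | [] => []
  | a :: l => step a (red l)

lemma step_chain {a : Bool} {m : List Bool} (h : List.IsChain (· ≠ ·) m) :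
    List.IsChain (· ≠ ·) (step a m) := by
  cases m with
  | nil => simp [step]
  | cons b r =>
    by_cases hab : a = b
    · simpa [step, hab] using h.tail
    · have hs : step a (b :: r) = a :: b :: r := by simp [step, hab]
      rw [hs]
      exact List.isChain_cons_cons.2 ⟨hab, h⟩

lemma red_chain (l : List Bool) : List.IsChain (· ≠ ·) (red l) := by
  induction l with
  | nil => simp [red]
  | cons a l ih => exact step_chain ih

lemma step_step {a : Bool} {m : List Bool} (h : List.IsChain (· ≠ ·) m) :
    step a (step a m) = m := by
  cases m with
  | nil => simp [step]
  | cons b r =>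
    by_cases hab : a = b
    · subst hab
      cases r with
      | nil => simp [step]
      | cons c r' =>
        have hac : a ≠ c := (List.isChain_cons_cons.1 h).1
        simp [step, hac]
    · simp [step, hab]

lemma red_reduced_fix {m : List Bool} (h : List.IsChain (· ≠ ·) m) : red m = m := by
  induction m with
  | nil => rfl
  | cons a r ih =>
    have h1 : red (a :: r) = step a (red r) := rfl
    rw [h1, ih h.tail]
    cases r with
    | nil => rfl
    | cons b r' => simp [step, (List.isChain_cons_cons.1 h).1]

lemma red_append_pair (p s : List Bool) (a : Bool) :
    red (p ++ a :: a :: s) = red (p ++ s) := by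
  induction p with
  | nil => simp [red, step_step (red_chain s)]
  | cons c p ih => simp [red, ih]

lemma edge_decomp {l l' : List Bool} {i : ℕ} (h : Edge l i l') :
    ∃ a, l = l.take (i - 1) ++ a :: a :: l.drop (i + 1) ∧
      l' = l.take (i - 1) ++ l.drop (i + 1) := by
  obtain ⟨h1, h2, h3, h4⟩ := h
  have hi1 : i - 1 < l.length := by omega
  have hi : i < l.length := by omega
  refine ⟨l[i - 1], ?_, h4⟩
  have hd : l.drop (i - 1) = l[i - 1] :: l.drop (i - 1 + 1) := List.drop_eq_getElem_cons hi1
  have hd2 : l.drop i = l[i] :: l.drop (i + 1) := List.drop_eq_getElem_cons hi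
  have hii : i - 1 + 1 = i := by omega
  have heq : l[i - 1] = l[i] := by
    have := h3
    rw [List.getElem?_eq_getElem hi1, List.getElem?_eq_getElem hi] at this
    exact Option.some.inj this
  rw [hii] at hd
  conv_lhs => rw [← List.take_append_drop (i - 1) l]
  rw [hd, hd2, heq]

lemma edge_red {l l' : List Bool} {i : ℕ} (h : Edge l i l') : red l = red l' := by
  obtain ⟨a, hl, hl'⟩ := edge_decomp h
  rw [hl', ← red_append_pair _ _ a, ← hl]

lemma path_red {l l' : List Bool} {pat : List ℕ} (h : PathP l pat l') : red l = red l' := by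
  induction h with
  | nil => rfl
  | cons e _ ih => exact (edge_red e).trans ih

lemma edge_lift {l l' : List Bool} {i : ℕ} (a : Bool) (h : Edge l i l') :
    Edge (a :: l) (i + 1) (a :: l') := by
  obtain ⟨h1, h2, h3, h4⟩ := h
  refine ⟨by omega, by simpa using Nat.succ_le_succ h2, ?_, ?_⟩
  · have : i + 1 - 1 = (i - 1) + 1 := by omega
    rw [this, List.getElem?_cons_succ, List.getElem?_cons_succ]
    exact h3
  · have : i + 1 - 1 = (i - 1) + 1 := by omega
    rw [this, List.take_succ_cons, List.drop_succ_cons, h4]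
    simp

lemma path_lift {l l' : List Bool} {pat : List ℕ} (a : Bool) (h : PathP l pat l') :
    PathP (a :: l) (pat.map (· + 1)) (a :: l') := by
  induction h with
  | nil => exact PathP.nil _
  | cons e _ ih => exact PathP.cons (edge_lift a e) ih

lemma path_snoc {l m n : List Bool} {pat : List ℕ} {i : ℕ}
    (h : PathP l pat m) (e : Edge m i n) : PathP l (pat ++ [i]) n := by
  revert e
  induction h with
  | nil => intro e; exact PathP.cons e (PathP.nil _)
  | cons e' _ ih => intro e; exact PathP.cons e' (ih e)

lemma path_to_red (l : List Bool) : ∃ pat, PathP l pat (red l) := by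
  induction l with
  | nil => exact ⟨[], PathP.nil _⟩
  | cons a l ih =>
    obtain ⟨pat, hp⟩ := ih
    have hp' := path_lift a hp
    cases hm : red l with
    | nil =>
      refine ⟨pat.map (· + 1), ?_⟩
      rw [hm] at hp'
      simpa [red, hm, step] using hp'
    | cons b r =>
      by_cases hab : a = b
      · subst hab
        refine ⟨pat.map (· + 1) ++ [1], ?_⟩
        have hred : red (a :: l) = r := by simp [red, hm, step]
        rw [hred]
        rw [hm] at hp'
        have hedge : Edge (a :: a :: r) 1 r := by
          refine ⟨le_refl 1, by simp, by simp, by simp⟩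
        exact path_snoc hp' hedge
      · refine ⟨pat.map (· + 1), ?_⟩
        rw [hm] at hp'
        simpa [red, hm, step, hab] using hp'

lemma falt_succ (n : ℕ) : falt (n + 1) = true :: negT (falt n) := by
  simp only [falt, negT, List.range_succ_eq_map, List.map_cons, List.map_map]
  congr 1
  apply List.map_congr_left
  intro j _
  simp only [Function.comp, Nat.succ_eq_add_one]
  have h2 : (j + 1) % 2 = 1 - j % 2 := by omega
  rw [h2]
  rcases Nat.mod_two_eq_zero_or_one j with h | h <;> simp [h]

lemma negT_negT (l : List Bool) : negT (negT l) = l := by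
  simp [negT, List.map_map, Function.comp_def, Bool.not_not]

lemma negT_falt_succ (n : ℕ) : negT (falt (n + 1)) = false :: falt n := by
  rw [falt_succ]
  show (!true) :: negT (negT (falt n)) = false :: falt n
  rw [negT_negT]
  rfl

lemma falt_chain (n : ℕ) : List.IsChain (· ≠ ·) (falt n) ∧ List.IsChain (· ≠ ·) (negT (falt n)) := by
  induction n with
  | zero => simp [falt, negT]
  | succ n ih =>
    constructor
    · rw [falt_succ]
      cases n with
      | zero => simp [falt, negT]
      | succ m =>
        rw [negT_falt_succ]
        exact List.isChain_cons_cons.2 ⟨by simp, by rw [← negT_falt_succ]; exact ih.2⟩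
    · rw [negT_falt_succ]
      cases n with
      | zero => simp [falt]
      | succ m =>
        rw [falt_succ]
        exact List.isChain_cons_cons.2 ⟨by simp, by rw [← falt_succ]; exact ih.1⟩

lemma falt_length (n : ℕ) : (falt n).length = n := by simp [falt]

lemma negT_length (l : List Bool) : (negT l).length = l.length := by simp [negT]

lemma alt_eq {m : List Bool} (h : List.IsChain (· ≠ ·) m) :
    m = falt m.length ∨ m = negT (falt m.length) := by
  induction m with
  | nil => left; rfl
  | cons a r ih =>
    rcases ih h.tail with hr | hr
    · cases r with
      | nil =>
        cases a
        · right; decide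
        · left; decide
      | cons b r' =>
        have hb : b = true := by
          rw [List.length_cons, falt_succ] at hr
          exact (List.cons_eq_cons.1 hr).1
        have hab : a ≠ b := (List.isChain_cons_cons.1 h).1
        have ha : a = false := by cases a <;> simp_all
        right
        subst ha
        rw [show (false :: b :: r').length = (b :: r').length + 1 from rfl,
          negT_falt_succ, ← hr]
    · cases r with
      | nil =>
        cases a
        · right; decide
        · left; decide
      | cons b r' =>
        have hb : b = false := by
          rw [List.length_cons, negT_falt_succ] at hr
          exact (List.cons_eq_cons.1 hr).1
        have hab : a ≠ b := (List.isChain_cons_cons.1 h).1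
        have ha : a = true := by cases a <;> simp_all
        left
        subst ha
        rw [show (true :: b :: r').length = (b :: r').length + 1 from rfl,
          falt_succ, ← hr]

def toInt (m : List Bool) : ℤ := if m.head? = some false then -(m.length : ℤ) else m.length

lemma target_chain (t : ℤ) : List.IsChain (· ≠ ·) (target t) := by
  unfold target
  split
  · exact (falt_chain _).1
  · exact (falt_chain _).2

lemma toInt_falt (n : ℕ) : toInt (falt n) = n := by
  cases n with
  | zero => decide
  | succ m => rw [falt_succ]; simp [toInt, negT_length, falt_length]

lemma toInt_negT_falt (n : ℕ) (hn : 0 < n) : toInt (negT (falt n)) = -n := by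
  obtain ⟨m, rfl⟩ : ∃ m, n = m + 1 := ⟨n - 1, by omega⟩
  rw [negT_falt_succ]; simp [toInt, falt_length]

lemma target_ofNat (n : ℕ) : target (n : ℤ) = falt n := by
  unfold target
  rw [if_pos (Int.natCast_nonneg n)]
  simp

lemma target_negNat (n : ℕ) : target (-((n : ℤ) + 1)) = negT (falt (n + 1)) := by
  unfold target
  rw [if_neg (by omega)]
  have : (-(-((n : ℤ) + 1))).toNat = n + 1 := by omega
  rw [this]

lemma toInt_target (t : ℤ) : toInt (target t) = t := by
  unfold target
  split
  · rename_i ht; rw [toInt_falt]; omega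
  · rename_i ht; rw [toInt_negT_falt _ (by omega)]; omega

lemma target_toInt {m : List Bool} (h : List.IsChain (· ≠ ·) m) : target (toInt m) = m := by
  obtain ⟨n, hm⟩ : ∃ n, m = falt n ∨ m = negT (falt n) := ⟨m.length, alt_eq h⟩
  rcases hm with rfl | rfl
  · rw [toInt_falt, target_ofNat]
  · cases n with
    | zero => decide
    | succ k =>
      rw [toInt_negT_falt _ (Nat.succ_pos k)]
      have h2 := target_negNat k
      rw [show (-((k : ℤ) + 1)) = -((k + 1 : ℕ) : ℤ) by push_cast; ring] at h2
      exact h2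

lemma vmem_iff (t : ℤ) (l : List Bool) : Vmem t l ↔ red l = target t := by
  constructor
  · rintro ⟨pat, hp⟩
    rw [path_red hp, red_reduced_fix (target_chain t)]
  · intro h
    obtain ⟨pat, hp⟩ := path_to_red l
    exact ⟨pat, h ▸ hp⟩

/-- the sets `V_t`, `t ∈ ℤ`, are pairwise disjoint and cover all sign
tuples (each tuple lies in exactly one `V_t`), and two tuples lie in a common `V_t`
exactly when they are connected in the underlying undirected reachability structure. -/
theorem stmt_11 :
    (∀ e : List Bool, ∃! t : ℤ, Vmem t e) ∧
      ∀ e e' : List Bool,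
        (∃ t : ℤ, Vmem t e ∧ Vmem t e') ↔
          Relation.ReflTransGen
            (fun a b => (∃ i : ℕ, Edge a i b) ∨ (∃ i : ℕ, Edge b i a)) e e' := by
  constructor
  · intro e
    refine ⟨toInt (red e), (vmem_iff _ _).2 (target_toInt (red_chain e)).symm, ?_⟩
    intro t' ht'
    have := (vmem_iff _ _).1 ht'
    rw [← toInt_target t', ← this]
  · intro e e'
    constructor
    · rintro ⟨t, ⟨p, hp⟩, ⟨p', hp'⟩⟩
      have key : ∀ {a b : List Bool} {pat : List ℕ}, PathP a pat b →
          Relation.ReflTransGen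
            (fun a b => (∃ i : ℕ, Edge a i b) ∨ (∃ i : ℕ, Edge b i a)) a b := by
        intro a b pat h
        induction h with
        | nil => exact Relation.ReflTransGen.refl
        | cons ed _ ih => exact Relation.ReflTransGen.head (Or.inl ⟨_, ed⟩) ih
      have hsym : Symmetric (fun a b : List Bool => (∃ i : ℕ, Edge a i b) ∨ (∃ i : ℕ, Edge b i a)) := by
        intro a b h; tauto
      haveI : Std.Symm (fun a b : List Bool => (∃ i : ℕ, Edge a i b) ∨ (∃ i : ℕ, Edge b i a)) := ⟨fun a b h => hsym h⟩
      exact (key hp).trans (Std.Symm.symm _ _ (key hp'))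
    · intro h
      have hred : red e = red e' := by
        induction h with
        | refl => rfl
        | tail hs hstep ih =>
          rcases hstep with ⟨i, hi⟩ | ⟨i, hi⟩
          · exact ih.trans (edge_red hi)
          · exact ih.trans (edge_red hi).symm
      refine ⟨toInt (red e), (vmem_iff _ _).2 (target_toInt (red_chain e)).symm, ?_⟩
      rw [vmem_iff, hred]
      exact (target_toInt (red_chain e')).symm
end

section
/- Let e = (e₁,…,e_k) = ±f_{t₁,…,t_m} ∈ V₀ be a nonempty sign tuple in the component of the empty tuple, and suppose additionally e_{t₁+2} = e_{t₁+1} (equivalently m > 2 and t₂ = 1). Then there exists a path e → f₀ in the sign-deletion graph whose label pattern has the form (i₁,…,i_S, t₁+1, t₁, t₁−1, …, 2, 1) with i_j > t₁ + 2 for all j = 1,…,S. -/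
/-- The alternating tuple of length `t` starting with the sign `s`. -/
def altFrom (s : Bool) : ℕ → List Bool
  | 0 => []
  | t + 1 => s :: altFrom (!s) t

/-- Auxiliary: concatenation of alternating blocks of lengths `ts`, starting with sign `s`,
each block starting with the sign ending the previous one (so adjacent entries agree
exactly at block junctions). -/
def fcatAux (s : Bool) : List ℕ → List Bool
  | [] => []
  | t :: ts => altFrom s t ++ fcatAux (if t % 2 = 1 then s else !s) ts

/-- `f_{t₁,…,t_m}`: the concatenation of alternating blocks of lengths `t₁,…,t_m`. -/
def fcat (ts : List ℕ) : List Bool := fcatAux true ts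

/-- `sgn ε l` is `l` if `ε = +1` and `−l` if `ε = −1`. -/
def sgn (e : Bool) (l : List Bool) : List Bool := if e then l else negT l

def Step (l l' : List Bool) : Prop := ∃ u x v, l = u ++ x :: x :: v ∧ l' = u ++ v

abbrev Steps := Relation.ReflTransGen Step

lemma edge_mid (u : List Bool) (x : Bool) (v : List Bool) :
    Edge (u ++ x :: x :: v) (u.length + 1) (u ++ v) := by
  refine ⟨Nat.le_add_left 1 _, by simp, ?_, ?_⟩
  · show (u ++ x :: x :: v)[u.length + 1 - 1]? = (u ++ x :: x :: v)[u.length + 1]?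
    rw [Nat.add_sub_cancel, List.getElem?_append_right le_rfl,
      List.getElem?_append_right (by omega)]
    simp
  · rw [Nat.add_sub_cancel, List.take_left, show u.length + 1 + 1 = u.length + 2 from rfl,
      List.drop_append]
    simp

lemma step_of_edge {l i l'} (h : Edge l i l') : Step l l' := by
  obtain ⟨h1, h2, h3, h4⟩ := h
  have hi1 : i - 1 < l.length := by omega
  have hi : i < l.length := by omega
  refine ⟨l.take (i-1), l[i-1], l.drop (i+1), ?_, h4.symm ▸ rfl⟩
  have hd1 : l.drop (i-1) = l[i-1] :: l.drop i := by
    have := List.drop_eq_getElem_cons hi1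
    rwa [show i - 1 + 1 = i by omega] at this
  have hd2 : l.drop i = l[i] :: l.drop (i+1) := List.drop_eq_getElem_cons hi
  have hx : l[i] = l[i-1] := by
    have := h3
    rw [List.getElem?_eq_getElem hi1, List.getElem?_eq_getElem hi] at this
    exact (Option.some.inj this).symm
  calc l = l.take (i-1) ++ l.drop (i-1) := (List.take_append_drop _ _).symm
    _ = _ := by rw [hd1, hd2, hx]

lemma steps_of_pathp {l pat l'} (h : PathP l pat l') : Steps l l' := by
  induction h with
  | nil => exact Relation.ReflTransGen.refl
  | cons e _ ih => exact Relation.ReflTransGen.head (step_of_edge e) ih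

lemma pathp_append {l m n p q} (h1 : PathP l p m) (h2 : PathP m q n) : PathP l (p ++ q) n := by
  induction h1 with
  | nil => exact h2
  | cons e _ ih => exact PathP.cons e (ih h2)

lemma pal (c : List Bool) :
    PathP (c ++ c.reverse) ((List.range c.length).map fun j => c.length - j) [] := by
  induction c using List.reverseRecOn with
  | nil => exact PathP.nil []
  | append_singleton d x ih =>
    have hrev : (d ++ [x]).reverse = x :: d.reverse := by simp
    have hlen : (d ++ [x]).length = d.length + 1 := by simp
    rw [hrev, hlen, List.range_succ_eq_map]
    have hpat : ((0 :: (List.range d.length).map Nat.succ).map fun j => d.length + 1 - j)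
        = (d.length + 1) :: ((List.range d.length).map fun j => d.length - j) := by
      simp [List.map_map, Function.comp]
    rw [hpat]
    have he : Edge (d ++ x :: x :: d.reverse) (d.length + 1) (d ++ d.reverse) :=
      edge_mid d x d.reverse
    exact PathP.cons (by simpa using he) ih

-- shifted path from steps
lemma pathp_shift {b m : List Bool} (h : Steps b m) (P : List Bool) :
    ∃ pat, (∀ i ∈ pat, P.length < i) ∧ PathP (P ++ b) pat (P ++ m) := by
  induction h using Relation.ReflTransGen.head_induction_on with
  | refl => exact ⟨[], by simp, PathP.nil _⟩
  | head s _ ih =>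
    obtain ⟨u, x, v, h1, h2⟩ := s
    obtain ⟨pat, hpat, hp⟩ := ih
    refine ⟨(P.length + u.length + 1) :: pat, ?_, ?_⟩
    · intro i hi
      rcases List.mem_cons.1 hi with h | h
      · omega
      · exact hpat i h
    · refine PathP.cons ?_ (h2 ▸ hp)
      have := edge_mid (P ++ u) x v
      simpa [h1, List.append_assoc, Nat.add_assoc] using this

lemma steps_append_left {x y : List Bool} (c : List Bool) (h : Steps x y) :
    Steps (c ++ x) (c ++ y) :=
  Relation.ReflTransGen.lift (r := Step) (p := Step) (c ++ ·) (fun a b ⟨u, t, v, h1, h2⟩ =>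
    ⟨c ++ u, t, v, by simp [h1], by simp [h2]⟩) _ _ h

lemma steps_append_right {x y : List Bool} (c : List Bool) (h : Steps x y) :
    Steps (x ++ c) (y ++ c) :=
  Relation.ReflTransGen.lift (r := Step) (p := Step) (· ++ c) (fun a b ⟨u, t, v, h1, h2⟩ =>
    ⟨u, t, v ++ c, by simp [h1], by simp [h2]⟩) _ _ h

lemma rev_steps (c : List Bool) : Steps (c ++ c.reverse) [] := by
  induction c using List.reverseRecOn with
  | nil => simp; exact Relation.ReflTransGen.refl
  | append_singleton d x ih =>
    refine Relation.ReflTransGen.head ⟨d, x, d.reverse, by simp, rfl⟩ ih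

lemma local_conf_aux {u u' v v' : List Bool} {x y : Bool}
    (h : u ++ x :: x :: v = u' ++ y :: y :: v') (hle : u.length ≤ u'.length) :
    u ++ v = u' ++ v' ∨ ∃ w, Step (u ++ v) w ∧ Step (u' ++ v') w := by
  rcases List.append_eq_append_iff.1 h with ⟨t, ht1, ht2⟩ | ⟨t, ht1, ht2⟩
  · -- u' = u ++ t, x::x::v = t ++ y::y::v'
    match t, ht2 with
    | [], ht2 =>
      simp at ht2 ht1
      obtain ⟨hxy, hv⟩ := ht2
      left; rw [ht1, hv]
    | [a], ht2 =>
      simp at ht2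
      obtain ⟨hax, hxy, hv⟩ := ht2
      left
      rw [ht1, hv]
      have : a = y := hax.symm.trans hxy
      subst this
      simp
    | a :: b :: t', ht2 =>
      simp only [List.cons_append] at ht2
      injection ht2 with ha ht3
      injection ht3 with hb hv
      right
      refine ⟨u ++ t' ++ v', ⟨u ++ t', y, v', by simp [hv], by simp⟩,
        ⟨u, x, t' ++ v', by simp [ht1, ← ha, ← hb], by simp⟩⟩
  · -- u = u' ++ t, y::y::v' = t ++ x::x::v
    have : t = [] := by
      have h1 := congrArg List.length ht1
      simp at h1
      exact List.length_eq_zero_iff.1 (by omega)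
    subst this
    simp at ht1 ht2
    obtain ⟨hxy, hv⟩ := ht2
    left; rw [ht1, hv]

lemma local_conf : ∀ a b c, Step a b → Step a c →
    ∃ d, Relation.ReflGen Step b d ∧ Relation.ReflTransGen Step c d := by
  rintro a b c ⟨u, x, v, h1, h2⟩ ⟨u', y, v', h1', h2'⟩
  subst h2 h2'
  rcases le_total u.length u'.length with hle | hle
  · rcases local_conf_aux (h1 ▸ h1') hle with h | ⟨w, hw1, hw2⟩
    · exact ⟨u' ++ v', h ▸ Relation.ReflGen.refl, Relation.ReflTransGen.refl⟩
    · exact ⟨w, Relation.ReflGen.single hw1, Relation.ReflTransGen.single hw2⟩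
  · rcases local_conf_aux (h1' ▸ h1) hle with h | ⟨w, hw1, hw2⟩
    · exact ⟨u ++ v, Relation.ReflGen.refl, by rw [h]⟩
    · exact ⟨w, Relation.ReflGen.single hw2, Relation.ReflTransGen.single hw1⟩

lemma no_step_nil {z} : ¬ Step [] z := by
  rintro ⟨u, x, v, h, -⟩
  simp at h

lemma steps_nil_eq {d} (h : Steps [] d) : d = [] := by
  rcases Relation.ReflTransGen.cases_head h with h | ⟨c, hc, -⟩
  · exact h.symm
  · exact absurd hc no_step_nil

lemma chain'_ne_altFrom (n : ℕ) : ∀ s, List.Chain' (· ≠ ·) (altFrom s n) := by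
  induction n with
  | zero => intro s; exact List.isChain_nil
  | succ n ih =>
    intro s
    rw [altFrom, show List.Chain' _ _ ↔ List.IsChain _ _ from Iff.rfl, List.isChain_cons]
    refine ⟨?_, ih (!s)⟩
    intro h hh
    cases n with
    | zero => simp [altFrom] at hh
    | succ m =>
      simp [altFrom] at hh
      subst hh
      simp

lemma no_step_of_chain' {l z : List Bool} (hc : List.Chain' (· ≠ ·) l) : ¬ Step l z := by
  rintro ⟨u, x, v, h, -⟩
  subst h
  have := (List.isChain_append.1 hc).2.1
  exact (List.isChain_cons_cons.1 this).1 rfl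

lemma steps_irred {l d : List Bool} (hc : List.Chain' (· ≠ ·) l) (h : Steps l d) : d = l := by
  rcases Relation.ReflTransGen.cases_head h with h | ⟨c, hc', -⟩
  · exact h.symm
  · exact absurd hc' (no_step_of_chain' hc)

lemma chain'_ne_rev {l : List Bool} (h : List.Chain' (· ≠ ·) l) :
    List.Chain' (· ≠ ·) l.reverse := by
  rw [show List.Chain' _ _ ↔ List.IsChain _ _ from Iff.rfl, List.isChain_reverse]
  exact List.IsChain.imp (p := h) fun a b h => Ne.symm h


lemma altFrom_length (s : Bool) (n : ℕ) : (altFrom s n).length = n := by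
  induction n generalizing s with
  | zero => rfl
  | succ n ih => simp [altFrom, ih]

lemma negT_altFrom (s : Bool) (n : ℕ) : negT (altFrom s n) = altFrom (!s) n := by
  induction n generalizing s with
  | zero => rfl
  | succ n ih =>
    show (!s) :: negT (altFrom (!s) n) = (!s) :: altFrom (!(!s)) n
    rw [ih]

lemma sgn_altFrom_append (ε : Bool) (n : ℕ) (R : List Bool) :
    sgn ε (altFrom true n ++ R) = altFrom ε n ++ sgn ε R := by
  cases ε with
  | true => simp [sgn]
  | false =>
    show negT (altFrom true n ++ R) = altFrom false n ++ negT R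
    rw [negT, List.map_append]
    congr 1
    exact negT_altFrom true n


/-- if moreover `e_{t₁+2} = e_{t₁+1}` (equivalently `m > 2` and `t₂ = 1`),
then there is a path `e → f₀` whose pattern is `(i₁,…,i_S, t₁+1, t₁, t₁−1, …, 2, 1)` with
every `i_j > t₁ + 2`. -/
theorem stmt_16 (ε : Bool) (t₁ : ℕ) (rest : List ℕ) (h₁ : 0 < t₁)
    (hr : ∀ x ∈ rest, 0 < x) (e : List Bool) (he : e = sgn ε (fcat (t₁ :: rest)))
    (h0 : Vmem 0 e) (hlen : t₁ + 2 ≤ e.length) (heq : e[t₁ + 1]? = e[t₁]?) :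
    ∃ pre : List ℕ, (∀ i ∈ pre, t₁ + 2 < i) ∧
      PathP e (pre ++ (t₁ + 1) :: (List.range t₁).map fun j => t₁ - j) [] := by
  set A := altFrom ε t₁ with hA
  have hAlen : A.length = t₁ := altFrom_length ε t₁
  -- e starts with A
  have heA : ∃ C, e = A ++ C := by
    refine ⟨sgn ε (fcatAux (if t₁ % 2 = 1 then true else !true) rest), ?_⟩
    rw [he]
    show sgn ε (fcatAux true (t₁ :: rest)) = _
    rw [fcatAux, sgn_altFrom_append]
  obtain ⟨C, heC⟩ := heA
  have ht1 : t₁ < e.length := by omega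
  have ht2 : t₁ + 1 < e.length := by omega
  set x := e[t₁] with hx
  have hx1 : e[t₁]? = some x := List.getElem?_eq_getElem ht1
  have hx2 : e[t₁ + 1]? = some x := heq.trans hx1
  set b := e.drop (t₁ + 2) with hb
  have hdecomp : e = A ++ x :: x :: b := by
    have h1 : e.take t₁ = A := by rw [heC, ← hAlen, List.take_left]
    have h2 : e.drop t₁ = x :: e.drop (t₁ + 1) := List.drop_eq_getElem_cons ht1
    have h3 : e.drop (t₁ + 1) = e[t₁ + 1] :: b := List.drop_eq_getElem_cons ht2
    have h4 : e[t₁ + 1] = x := by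
      have := hx2; rwa [List.getElem?_eq_getElem ht2, Option.some.injEq] at this
    calc e = e.take t₁ ++ e.drop t₁ := (List.take_append_drop _ _).symm
      _ = A ++ x :: x :: b := by rw [h1, h2, h3, h4]
  -- e reduces to []
  obtain ⟨pat0, hp0⟩ := h0
  rw [show target 0 = [] by simp [target, falt]] at hp0
  have hsteps_e : Steps e [] := steps_of_pathp hp0
  have hstep1 : Step e (A ++ b) := ⟨A, x, b, hdecomp, rfl⟩
  -- A ++ b reduces to []
  have hAb : Steps (A ++ b) [] := by
    obtain ⟨d, hd1, hd2⟩ :=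
      Relation.church_rosser local_conf (Relation.ReflTransGen.single hstep1) hsteps_e
    rwa [steps_nil_eq hd2] at hd1
  -- b reduces to A.reverse
  have hbrev : Steps b A.reverse := by
    have hL1 : Steps (A.reverse ++ (A ++ b)) A.reverse := by
      have := steps_append_left A.reverse hAb
      simpa using this
    have hL2 : Steps (A.reverse ++ (A ++ b)) b := by
      have h5 : Steps (A.reverse ++ A) [] := by
        have := rev_steps A.reverse
        rwa [List.reverse_reverse] at this
      have := steps_append_right b h5
      simpa [List.append_assoc] using this
    obtain ⟨d, hd1, hd2⟩ := Relation.church_rosser local_conf hL1 hL2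
    have hch : List.Chain' (· ≠ ·) A.reverse :=
      chain'_ne_rev (chain'_ne_altFrom t₁ ε)
    rwa [steps_irred hch hd1] at hd2
  -- lift to a path on e
  obtain ⟨pre, hpre, hpath⟩ := pathp_shift hbrev (A ++ [x, x])
  have hPlen : (A ++ [x, x]).length = t₁ + 2 := by simp [hAlen]
  refine ⟨pre, fun i hi => hPlen ▸ hpre i hi, ?_⟩
  have hmid : (A ++ [x, x]) ++ A.reverse = (A ++ [x]) ++ (A ++ [x]).reverse := by
    simp
  have hfirst : PathP e pre ((A ++ [x]) ++ (A ++ [x]).reverse) := by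
    rw [← hmid]
    have : (A ++ [x, x]) ++ b = e := by rw [hdecomp]; simp
    rwa [this] at hpath
  have hlast : PathP ((A ++ [x]) ++ (A ++ [x]).reverse)
      ((t₁ + 1) :: (List.range t₁).map fun j => t₁ - j) [] := by
    have := pal (A ++ [x])
    have hlc : (A ++ [x]).length = t₁ + 1 := by simp [hAlen]
    rw [hlc, List.range_succ_eq_map] at this
    simp only [List.map_cons, List.map_map, Nat.sub_zero] at this
    have hmap : List.map ((fun j => t₁ + 1 - j) ∘ Nat.succ) (List.range t₁)
        = List.map (fun j => t₁ - j) (List.range t₁) :=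
      List.map_congr_left (fun a _ => by simp [Function.comp])
    rwa [hmap] at this
  exact pathp_append hfirst hlast
end

section
/- Let e = ±f_{t₁,…,t_m} ∈ V₁ be a sign tuple, different from f₁, in the component of f₁ = (1). Then there exists a path e → f₁ in the sign-deletion graph whose label pattern has the form (i₁,…,i_T, t₁, t₁−1, …, x) where x ∈ {1,2}, x = 1 whenever t₁ = 1, and i_j > t₁ + 1 for all j = 1,…,T. -/
namespace S17

/-! ### parity-xor -/

def xp (a : Bool) (n : ℕ) : Bool := Bool.xor a (decide (n % 2 = 1))

lemma xp_zero (a : Bool) : xp a 0 = a := by simp [xp]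

lemma xp_succ (a : Bool) (n : ℕ) : xp a (n+1) = !(xp a n) := by
  rcases Nat.mod_two_eq_zero_or_one n with h | h <;>
    simp [xp, Nat.add_mod, h]

lemma xp_two (a : Bool) (n : ℕ) : xp a (n+2) = xp a n := by
  rcases Nat.mod_two_eq_zero_or_one n with h | h <;>
    simp [xp, Nat.add_mod, h]

lemma xp_not (a : Bool) (n : ℕ) : xp (!a) n = !(xp a n) := by
  cases h : decide (n % 2 = 1) <;> simp [xp, h]

lemma xp_xp (a : Bool) (m n : ℕ) : xp (xp a m) n = xp a (m + n) := by
  rcases Nat.mod_two_eq_zero_or_one m with h1 | h1 <;>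
  rcases Nat.mod_two_eq_zero_or_one n with h2 | h2 <;>
    simp [xp, Nat.add_mod, h1, h2]

/-! ### altFrom -/

lemma altFrom_length : ∀ (n : ℕ) (a : Bool), (altFrom a n).length = n
  | 0, _ => rfl
  | n+1, a => by simp [altFrom, altFrom_length n]

lemma altFrom_snoc : ∀ (n : ℕ) (a : Bool), altFrom a (n+1) = altFrom a n ++ [xp a n]
  | 0, a => by simp [altFrom, xp_zero]
  | n+1, a => by
    rw [show altFrom a (n+2) = a :: altFrom (!a) (n+1) from rfl, altFrom_snoc n (!a)]
    simp [altFrom, xp_not, xp_succ]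

lemma negT_altFrom : ∀ (n : ℕ) (a : Bool), negT (altFrom a n) = altFrom (!a) n
  | 0, _ => rfl
  | n+1, a => by
    rw [show altFrom a (n+1) = a :: altFrom (!a) n from rfl,
      show altFrom (!a) (n+1) = (!a) :: altFrom (!!a) n from rfl]
    simp only [negT, List.map_cons, List.cons.injEq, true_and]
    exact negT_altFrom n (!a)

lemma reverse_altFrom : ∀ (n : ℕ) (a : Bool), (altFrom a n).reverse = altFrom (xp a (n+1)) n
  | 0, _ => rfl
  | n+1, a => by
    rw [altFrom_snoc, List.reverse_append, reverse_altFrom n a,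
      show altFrom (xp a (n+1+1)) (n+1)
        = xp a (n+1+1) :: altFrom (!(xp a (n+1+1))) n from rfl,
      show xp a (n+1+1) = xp a n from xp_two a n, ← xp_succ]
    simp

lemma altFrom_chain : ∀ (n : ℕ) (a : Bool), List.Chain' (· ≠ ·) (altFrom a n)
  | 0, _ => List.isChain_nil
  | 1, a => by simp [altFrom, List.Chain']
  | n+2, a => by
    have ih := altFrom_chain (n+1) (!a)
    rw [show altFrom a (n+2) = a :: altFrom (!a) (n+1) from rfl]
    rw [show altFrom (!a) (n+1) = (!a) :: altFrom (!!a) n from rfl] at ih ⊢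
    exact List.isChain_cons_cons.mpr ⟨by simp, ih⟩

/-! ### normal form -/

def nstep (a : Bool) : List Bool → List Bool
  | [] => [a]
  | b :: m => if a = b then m else a :: b :: m

def nf : List Bool → List Bool
  | [] => []
  | a :: l => nstep a (nf l)

lemma nf_cons (a : Bool) (l : List Bool) : nf (a :: l) = nstep a (nf l) := rfl

lemma nstep_chain {m : List Bool} (a : Bool) (h : List.Chain' (· ≠ ·) m) :
    List.Chain' (· ≠ ·) (nstep a m) := by
  cases m with
  | nil => simp [nstep, List.Chain']
  | cons b m' =>
    by_cases hab : a = b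
    · simpa [nstep, hab, List.Chain'] using h.tail
    · simpa [nstep, hab, List.Chain'] using List.isChain_cons_cons.mpr ⟨hab, h⟩

lemma nf_chain : ∀ l : List Bool, List.Chain' (· ≠ ·) (nf l)
  | [] => List.isChain_nil
  | a :: l => nstep_chain a (nf_chain l)

lemma nf_fixed : ∀ {l : List Bool}, List.Chain' (· ≠ ·) l → nf l = l
  | [], _ => rfl
  | a :: l, h => by
    have ht : List.Chain' (· ≠ ·) l := h.tail
    rw [nf_cons, nf_fixed ht]
    cases l with
    | nil => rfl
    | cons b m =>
      have hab : a ≠ b := List.isChain_cons_cons.mp h |>.1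
      simp [nstep, hab]

lemma nf_idem (l : List Bool) : nf (nf l) = nf l := nf_fixed (nf_chain l)

lemma nstep_nstep (a : Bool) : ∀ {m : List Bool}, List.Chain' (· ≠ ·) m →
    nstep a (nstep a m) = m
  | [], _ => by simp [nstep]
  | b :: m', h => by
    by_cases hab : a = b
    · subst hab
      rw [show nstep a (a :: m') = m' by simp [nstep]]
      cases m' with
      | nil => rfl
      | cons c m'' =>
        have hac : a ≠ c := List.isChain_cons_cons.mp h |>.1
        simp [nstep, hac]
    · rw [show nstep a (b :: m') = a :: b :: m' by simp [nstep, hab]]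
      simp [nstep]

lemma nf_pair (a : Bool) (l : List Bool) : nf (a :: a :: l) = nf l := by
  rw [nf_cons, nf_cons, nstep_nstep a (nf_chain l)]

lemma nf_del : ∀ (u : List Bool) (a : Bool) (v : List Bool),
    nf (u ++ a :: a :: v) = nf (u ++ v)
  | [], a, v => nf_pair a v
  | b :: u, a, v => by
    simp only [List.cons_append, nf_cons, nf_del u a v]

lemma nf_append_nf : ∀ (u v : List Bool), nf (u ++ nf v) = nf (u ++ v)
  | [], v => by simpa using nf_idem v
  | a :: u, v => by simp only [List.cons_append, nf_cons, nf_append_nf u v]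

lemma nf_revcancel : ∀ (X v : List Bool), nf (X.reverse ++ (X ++ v)) = nf v
  | [], v => by simp
  | x :: X, v => by
    have h : (x :: X).reverse ++ (x :: X ++ v) = X.reverse ++ (x :: x :: (X ++ v)) := by
      simp
    rw [h, nf_del, nf_revcancel X v]

lemma nf_altFrom (n : ℕ) (a : Bool) : nf (altFrom a n) = altFrom a n :=
  nf_fixed (altFrom_chain n a)


/-! ### edges and paths -/

lemma edge_mid (u v : List Bool) (c : Bool) :
    Edge (u ++ c :: c :: v) (u.length + 1) (u ++ v) := by
  have hform : u ++ c :: c :: v = (u ++ [c, c]) ++ v := by simp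
  refine ⟨Nat.le_add_left 1 u.length, ?_, ?_, ?_⟩
  · simp only [List.length_append, List.length_cons]
    omega
  · rw [Nat.add_sub_cancel]
    rw [List.getElem?_append_right (Nat.le_refl _),
      List.getElem?_append_right (Nat.le_add_right _ _)]
    simp
  · rw [Nat.add_sub_cancel, hform]
    rw [show u.length + 1 + 1 = (u ++ [c, c]).length by simp]
    rw [List.drop_left]
    rw [show ((u ++ [c, c]) ++ v).take u.length
        = (u ++ ([c, c] ++ v)).take u.length by simp]
    rw [List.take_append, List.take_of_length_le (Nat.le_refl _)]
    simp

lemma edge_shift {l l' : List Bool} {i : ℕ} (u : List Bool) (h : Edge l i l') :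
    Edge (u ++ l) (i + u.length) (u ++ l') := by
  obtain ⟨h1, h2, h3, h4⟩ := h
  refine ⟨by omega, by simp only [List.length_append]; omega, ?_, ?_⟩
  · have e1 : i + u.length - 1 = u.length + (i - 1) := by omega
    have e2 : i + u.length = u.length + i := by omega
    rw [e1, e2, List.getElem?_append_right (Nat.le_add_right _ _),
      List.getElem?_append_right (Nat.le_add_right _ _)]
    simpa using h3
  · rw [h4, List.take_append, List.drop_append,
      List.take_of_length_le (show u.length ≤ i + u.length - 1 by omega),
      List.drop_eq_nil_of_le (show u.length ≤ i + u.length + 1 by omega),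
      show i + u.length - 1 - u.length = i - 1 by omega,
      show i + u.length + 1 - u.length = i + 1 by omega]
    simp

lemma edge_nf_eq {l l' : List Bool} {i : ℕ} (h : Edge l i l') : nf l' = nf l := by
  obtain ⟨h1, h2, h3, h4⟩ := h
  have hi1 : i - 1 < l.length := by omega
  have hi : i < l.length := by omega
  have hval : l[i - 1] = l[i] := by
    rw [List.getElem?_eq_getElem hi1, List.getElem?_eq_getElem hi] at h3
    exact Option.some_injective _ h3
  have hd : l.drop (i - 1) = l[i] :: l[i] :: l.drop (i + 1) := by
    rw [List.drop_eq_getElem_cons hi1, hval]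
    congr 1
    rw [show i - 1 + 1 = i by omega, List.drop_eq_getElem_cons hi]
  calc nf l' = nf (l.take (i - 1) ++ l.drop (i + 1)) := by rw [h4]
    _ = nf (l.take (i - 1) ++ l[i] :: l[i] :: l.drop (i + 1)) := (nf_del _ _ _).symm
    _ = nf (l.take (i - 1) ++ l.drop (i - 1)) := by rw [hd]
    _ = nf l := by rw [List.take_append_drop]

lemma path_nf_eq : ∀ {l p m}, PathP l p m → nf l = nf m
  | _, _, _, PathP.nil _ => rfl
  | _, _, _, PathP.cons e hp => (edge_nf_eq e).symm.trans (path_nf_eq hp)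

lemma path_append : ∀ {l p m q n}, PathP l p m → PathP m q n → PathP l (p ++ q) n
  | _, _, _, _, _, PathP.nil _, h2 => h2
  | _, _, _, _, _, PathP.cons e hp, h2 => PathP.cons e (path_append hp h2)

lemma path_shift (u : List Bool) : ∀ {l p m}, PathP l p m →
    PathP (u ++ l) (p.map (· + u.length)) (u ++ m)
  | _, _, _, PathP.nil _ => PathP.nil _
  | _, _, _, PathP.cons e hp => PathP.cons (edge_shift u e) (path_shift u hp)

lemma path_pos : ∀ {l p m}, PathP l p m → ∀ i ∈ p, 1 ≤ i
  | _, _, _, PathP.nil _, i, hi => absurd hi List.not_mem_nil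
  | _, _, _, PathP.cons e hp, i, hi => by
    rcases List.mem_cons.mp hi with h | h
    · exact h ▸ e.1
    · exact path_pos hp i h

lemma path_to_nf : ∀ l : List Bool, ∃ p, PathP l p (nf l)
  | [] => ⟨[], PathP.nil []⟩
  | a :: l => by
    obtain ⟨p, hp⟩ := path_to_nf l
    have hp' : PathP (a :: l) (p.map (· + 1)) (a :: nf l) := by
      simpa using path_shift [a] hp
    cases h : nf l with
    | nil =>
      refine ⟨p.map (· + 1), ?_⟩
      rw [nf_cons, h]
      simpa [h, nstep] using hp'
    | cons b m =>
      by_cases hab : a = b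
      · subst hab
        have hedge : Edge (a :: a :: m) 1 m := by
          simpa using edge_mid [] m a
        refine ⟨p.map (· + 1) ++ [1], ?_⟩
        rw [nf_cons, h, show nstep a (a :: m) = m by simp [nstep]]
        exact path_append (h ▸ hp') (PathP.cons hedge (PathP.nil m))
      · refine ⟨p.map (· + 1), ?_⟩
        rw [nf_cons, h, show nstep a (b :: m) = a :: b :: m by simp [nstep, hab], ← h]
        exact hp'

/-! ### countdown paths -/

lemma pathA (a : Bool) : ∀ j : ℕ, PathP (altFrom a j ++ altFrom (xp a (j+1)) (j+1))
    ((List.range j).map (fun i => j - i)) [!a]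
  | 0 => by
    have h1 : altFrom (xp a 1) 1 = [!a] := by
      rw [show altFrom (xp a 1) 1 = [xp a 1] from rfl, show xp a 1 = xp a (0+1) from rfl,
        xp_succ, xp_zero]
    rw [show altFrom a 0 = [] from rfl, h1]
    exact PathP.nil _
  | j+1 => by
    have hpat : ((List.range (j+1)).map (fun i => j+1-i))
        = (j+1) :: (List.range j).map (fun i => j - i) := by
      rw [List.range_succ_eq_map, List.map_cons, List.map_map]
      simp [Function.comp_def, Nat.succ_sub_succ]
    have hsrc : altFrom a (j+1) ++ altFrom (xp a (j+1+1)) (j+1+1)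
        = altFrom a j ++ (xp a j) :: (xp a j) :: altFrom (xp a (j+1)) (j+1) := by
      rw [show xp a (j+1+1) = xp a j from xp_two a j, altFrom_snoc,
        show altFrom (xp a j) (j+1+1) = xp a j :: altFrom (!(xp a j)) (j+1) from rfl,
        ← xp_succ]
      simp
    have hedge := edge_mid (altFrom a j) (altFrom (xp a (j+1)) (j+1)) (xp a j)
    rw [altFrom_length] at hedge
    rw [hpat, hsrc]
    exact PathP.cons hedge (pathA a j)

lemma pathB (a : Bool) : ∀ j : ℕ, PathP (altFrom a (j+1) ++ altFrom (xp a j) j)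
    ((List.range j).map (fun i => j+1-i)) [a]
  | 0 => by
    rw [show altFrom (xp a 0) 0 = [] from rfl, show altFrom a 1 = [a] from rfl]
    simpa using PathP.nil [a]
  | j+1 => by
    have hpat : ((List.range (j+1)).map (fun i => j+1+1-i))
        = (j+1+1) :: (List.range j).map (fun i => j+1-i) := by
      rw [List.range_succ_eq_map, List.map_cons, List.map_map]
      simp [Function.comp_def, Nat.succ_sub_succ]
    have hsrc : altFrom a (j+1+1) ++ altFrom (xp a (j+1)) (j+1)
        = altFrom a (j+1) ++ (xp a (j+1)) :: (xp a (j+1)) :: altFrom (xp a j) j := by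
      rw [altFrom_snoc,
        show altFrom (xp a (j+1)) (j+1) = xp a (j+1) :: altFrom (!(xp a (j+1))) j from rfl,
        ← xp_succ, show xp a (j+1+1) = xp a j from xp_two a j]
      simp
    have hedge := edge_mid (altFrom a (j+1)) (altFrom (xp a j) j) (xp a (j+1))
    rw [altFrom_length] at hedge
    rw [hpat, hsrc]
    exact PathP.cons hedge (pathB a j)

/-! ### main auxiliary lemma -/

lemma main_aux (s : Bool) (t₁ : ℕ) (h₁ : 0 < t₁) (R' : List Bool)
    (hnf : nf (altFrom s t₁ ++ xp s (t₁ + 1) :: R') = [true]) :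
    ∃ (pre : List ℕ) (x : ℕ), (x = 1 ∨ x = 2) ∧ (t₁ = 1 → x = 1) ∧
      (∀ i ∈ pre, t₁ + 1 < i) ∧
      PathP (altFrom s t₁ ++ xp s (t₁ + 1) :: R')
        (pre ++ (List.range (t₁ - x + 1)).map fun j => t₁ - j) [true] := by
  obtain ⟨tm, rfl⟩ : ∃ tm, t₁ = tm + 1 := ⟨t₁ - 1, by omega⟩
  obtain ⟨p₀, hp₀⟩ := path_to_nf R'
  set W := nf R' with hWdef
  have hsplit : altFrom s (tm+1) ++ xp s (tm+1+1) :: R'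
      = altFrom s tm ++ xp s tm :: xp s tm :: R' := by
    rw [altFrom_snoc, show xp s (tm+1+1) = xp s tm from xp_two s tm]
    simp
  have hWnf : nf (altFrom s tm ++ W) = [true] := by
    rw [hWdef, nf_append_nf, ← nf_del (altFrom s tm) (xp s tm) R', ← hsplit]
    exact hnf
  have hWeq : W = nf (altFrom (xp s (tm+1)) tm ++ [true]) := by
    calc W = nf W := (nf_idem R').symm
      _ = nf ((altFrom s tm).reverse ++ (altFrom s tm ++ W)) := (nf_revcancel _ _).symm
      _ = nf ((altFrom s tm).reverse ++ nf (altFrom s tm ++ W)) := (nf_append_nf _ _).symm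
      _ = nf (altFrom (xp s (tm+1)) tm ++ [true]) := by rw [hWnf, reverse_altFrom]
  have hlen : (altFrom s (tm+1) ++ [xp s (tm+1+1)]).length = tm+1+1 := by
    simp [altFrom_length]
  have hPre : PathP (altFrom s (tm+1) ++ xp s (tm+1+1) :: R') (p₀.map (· + (tm+1+1)))
      (altFrom s (tm+1) ++ xp s (tm+1+1) :: W) := by
    have h := path_shift (altFrom s (tm+1) ++ [xp s (tm+1+1)]) hp₀
    rw [hlen] at h
    simpa [List.append_assoc] using h
  have hPreLab : ∀ i ∈ p₀.map (· + (tm+1+1)), tm + 1 + 1 < i := by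
    intro i hi
    obtain ⟨j, hj, rfl⟩ := List.mem_map.mp hi
    have := path_pos hp₀ j hj
    omega
  cases s with
  | false =>
    have hxt : xp (xp false (tm+1)) tm = true := by
      rw [xp_xp]
      have hm : (tm + 1 + tm) % 2 = 1 := by omega
      simp [xp, hm]
    have hWval : W = altFrom (xp false (tm+1)) (tm+1) := by
      rw [hWeq, ← hxt, ← altFrom_snoc, nf_altFrom]
    have hns : (!(xp false (tm+1+1))) = xp false (tm+1) := by
      rw [show xp false (tm+1+1) = !(xp false (tm+1)) from xp_succ false (tm+1),
        Bool.not_not]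
    have hjoin : altFrom false (tm+1) ++ xp false (tm+1+1) :: W
        = altFrom false (tm+1) ++ altFrom (xp false (tm+1+1)) (tm+1+1) := by
      rw [hWval, show altFrom (xp false (tm+1+1)) (tm+1+1)
          = xp false (tm+1+1) :: altFrom (!(xp false (tm+1+1))) (tm+1) from rfl, hns]
    have hcount : PathP (altFrom false (tm+1) ++ altFrom (xp false (tm+1+1)) (tm+1+1))
        ((List.range (tm+1)).map (fun i => tm+1-i)) [true] := by
      simpa using pathA false (tm+1)
    refine ⟨p₀.map (· + (tm+1+1)), 1, Or.inl rfl, fun _ => rfl, hPreLab, ?_⟩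
    rw [show tm + 1 - 1 + 1 = tm + 1 from by omega]
    exact path_append hPre (by rw [hjoin]; exact hcount)
  | true =>
    cases tm with
    | zero =>
      have hWval : W = [true] := by simpa [altFrom, nf, nstep] using hWeq
      have hx2 : xp true (0+1+1) = true := by simp [xp]
      refine ⟨p₀.map (· + (0+1+1)), 1, Or.inl rfl, fun _ => rfl, hPreLab, ?_⟩
      have hpat : (List.range (0+1-1+1)).map (fun j => 0+1-j) = [1] := by decide
      rw [hpat]
      refine path_append hPre ?_
      rw [hWval, hx2, show altFrom true (0+1) = [true] from rfl]
      have hedge : Edge [true, true, true] 1 [true] := by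
        simpa using edge_mid [] [true] true
      exact PathP.cons hedge (PathP.nil _)
    | succ n =>
      have hxt : xp (xp true (n+1+1)) n = true := by
        rw [xp_xp]
        have hm : (n + 1 + 1 + n) % 2 = 0 := by omega
        simp [xp, hm]
      have hWval : W = altFrom (xp true (n+1+1)) n := by
        rw [hWeq, show altFrom (xp true (n+1+1)) (n+1)
            = altFrom (xp true (n+1+1)) n ++ [xp (xp true (n+1+1)) n] from altFrom_snoc n _,
          hxt]
        rw [show altFrom (xp true (n+1+1)) n ++ [true] ++ [true]
            = altFrom (xp true (n+1+1)) n ++ true :: true :: [] from by simp]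
        rw [nf_del, List.append_nil, nf_altFrom]
      have hns : (!(xp true (n+1+1+1))) = xp true (n+1+1) := by
        rw [show xp true (n+1+1+1) = !(xp true (n+1+1)) from xp_succ true (n+1+1),
          Bool.not_not]
      have hns2 : xp true (n+1+1+1) = xp true (n+1) := xp_two true (n+1)
      have hjoin : altFrom true (n+1+1) ++ xp true (n+1+1+1) :: W
          = altFrom true (n+1+1) ++ altFrom (xp true (n+1)) (n+1) := by
        rw [hWval, show altFrom (xp true (n+1)) (n+1)
            = xp true (n+1) :: altFrom (!(xp true (n+1))) n from rfl,
          show (!(xp true (n+1))) = xp true (n+1+1) from (xp_succ true (n+1)).symm, hns2]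
      have hcount : PathP (altFrom true (n+1+1) ++ altFrom (xp true (n+1)) (n+1))
          ((List.range (n+1)).map (fun i => n+1+1-i)) [true] := pathB true (n+1)
      refine ⟨p₀.map (· + (n+1+1+1)), 2, Or.inr rfl, fun h => by omega, hPreLab, ?_⟩
      rw [show n + 1 + 1 - 2 + 1 = n + 1 from by omega]
      exact path_append hPre (by rw [hjoin]; exact hcount)

end S17

/-- if `e = ±f_{t₁,…,t_m} ∈ V₁` and `e ≠ f₁`, there is a path `e → f₁`
whose pattern is `(i₁,…,i_T, t₁, t₁−1, …, x)` with `x ∈ {1,2}`, `x = 1` whenever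
`t₁ = 1`, and every `i_j > t₁ + 1`. -/
theorem stmt_17 (ε : Bool) (t₁ : ℕ) (rest : List ℕ) (h₁ : 0 < t₁)
    (hr : ∀ x ∈ rest, 0 < x) (e : List Bool) (he : e = sgn ε (fcat (t₁ :: rest)))
    (hne : e ≠ falt 1) (h1 : Vmem 1 e) :
    ∃ (pre : List ℕ) (x : ℕ), (x = 1 ∨ x = 2) ∧ (t₁ = 1 → x = 1) ∧
      (∀ i ∈ pre, t₁ + 1 < i) ∧
      PathP e (pre ++ (List.range (t₁ - x + 1)).map fun j => t₁ - j) (falt 1) := by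
  obtain ⟨pat, hpat⟩ := h1
  have htarget : target 1 = [true] := by decide
  have hfalt : falt 1 = [true] := by decide
  have hnfe : S17.nf e = [true] := by
    have h := S17.path_nf_eq hpat
    rw [htarget] at h
    exact h
  cases rest with
  | nil =>
    exfalso
    have hef : e = altFrom ε t₁ := by
      rw [he, show fcat [t₁] = altFrom true t₁ ++ fcatAux (if t₁ % 2 = 1 then true else !true) [] from rfl,
        show fcatAux (if t₁ % 2 = 1 then true else !true) [] = [] from rfl, List.append_nil]
      cases ε
      · rw [show sgn false (altFrom true t₁) = negT (altFrom true t₁) from rfl,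
          S17.negT_altFrom, Bool.not_true]
      · rfl
    have : e = S17.nf e := by rw [hef, S17.nf_altFrom]
    exact hne (by rw [hfalt, this, hnfe])
  | cons r₀ rest' =>
    obtain ⟨r, rfl⟩ : ∃ r, r₀ = r + 1 := ⟨r₀ - 1, by have := hr r₀ (by simp); omega⟩
    have hσ : (if t₁ % 2 = 1 then true else !true) = S17.xp true (t₁+1) := by
      rcases Nat.mod_two_eq_zero_or_one t₁ with h | h <;> simp [S17.xp, Nat.add_mod, h]
    obtain ⟨RR, hfc⟩ : ∃ RR : List Bool,
        fcat (t₁ :: (r+1) :: rest') = altFrom true t₁ ++ S17.xp true (t₁+1) :: RR := by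
      refine ⟨altFrom (!(S17.xp true (t₁+1))) r
        ++ fcatAux (if (r+1) % 2 = 1 then S17.xp true (t₁+1) else !(S17.xp true (t₁+1))) rest', ?_⟩
      rw [show fcat (t₁ :: (r+1) :: rest')
          = altFrom true t₁ ++ (altFrom (if t₁ % 2 = 1 then true else !true) (r+1)
            ++ fcatAux (if (r+1) % 2 = 1 then (if t₁ % 2 = 1 then true else !true)
                else !(if t₁ % 2 = 1 then true else !true)) rest') from rfl, hσ]
      rw [show altFrom (S17.xp true (t₁+1)) (r+1)
          = S17.xp true (t₁+1) :: altFrom (!(S17.xp true (t₁+1))) r from rfl]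
      simp
    cases ε with
    | true =>
      have he' : e = altFrom true t₁ ++ S17.xp true (t₁+1) :: RR := by
        rw [he, show sgn true (fcat (t₁ :: (r+1) :: rest')) = fcat (t₁ :: (r+1) :: rest') from rfl, hfc]
      rw [hfalt, he']
      exact S17.main_aux true t₁ h₁ RR (by rw [← he']; exact hnfe)
    | false =>
      have hx : (!(S17.xp true (t₁+1))) = S17.xp false (t₁+1) := by
        rw [← S17.xp_not, Bool.not_true]
      have he' : e = altFrom false t₁ ++ S17.xp false (t₁+1) :: negT RR := by
        rw [he, show sgn false (fcat (t₁ :: (r+1) :: rest'))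
            = negT (fcat (t₁ :: (r+1) :: rest')) from rfl, hfc]
        rw [show negT (altFrom true t₁ ++ S17.xp true (t₁+1) :: RR)
            = negT (altFrom true t₁) ++ (!(S17.xp true (t₁+1))) :: negT RR from by
          simp [negT]]
        rw [S17.negT_altFrom, hx]
        rfl
      rw [hfalt, he']
      exact S17.main_aux false t₁ h₁ (negT RR) (by rw [← he']; exact hnfe)
end
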